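/- arXiv:2303.11795 — 4 statements merged into one kernel-verified Lean document; each statement's English description precedes it below -/
import Mathlib

section
/- The real bilinear map u(H) × b₁⁺(H) → ℝ given by (A, B) ↦ Im Tr(AB) is continuous and non-degenerate in both arguments: if A ∈ u(H) satisfies Im Tr(AB) = 0 for all B ∈ b₁⁺(H) then A = 0, and if B ∈ b₁⁺(H) satisfies Im Tr(AB) = 0 for all A ∈ u(H) then B = 0. -/
/- Setting: `H` is a separable complex Hilbert space with a fixed orthonormal
(Hilbert) basis `e` indexed by `ℤ`. -/

set_option synthInstance.maxHeartbeats 1000000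
set_option maxHeartbeats 2000000
set_option linter.unusedSectionVars false
set_option linter.unusedTactic false
set_option linter.unnecessarySeqFocus false

noncomputable section
open ContinuousLinearMap

namespace PL

variable {H : Type*} [NormedAddCommGroup H] [InnerProductSpace ℂ H] [CompleteSpace H]

/-- `A` is a bounded skew-hermitian operator: `A* = -A`. -/
def SkewHerm (A : H →L[ℂ] H) : Prop := star A = -A

/-- `A` is Hilbert–Schmidt: `∑ₙ ‖A eₙ‖² < ∞` (computed in the orthonormal basis `e`;
this is equivalent to the basis-free notion). -/
def IsHS (e : HilbertBasis ℤ ℂ H) (A : H →L[ℂ] H) : Prop :=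
  Summable (fun n : ℤ => ‖A (e n)‖ ^ 2)

/-- The Hilbert–Schmidt norm `‖A‖₂`. -/
def hsNorm (e : HilbertBasis ℤ ℂ H) (A : H →L[ℂ] H) : ℝ :=
  Real.sqrt (∑' n : ℤ, ‖A (e n)‖ ^ 2)

/-- The absolute value `|A| = √(A* A)` of a bounded operator, via the continuous
functional calculus. -/
def absCLM (A : H →L[ℂ] H) : H →L[ℂ] H := CFC.sqrt (star A * A)

/-- `A` is trace class: `Tr |A| = ∑ₙ ⟨eₙ, |A| eₙ⟩ < ∞`. -/
def IsTC (e : HilbertBasis ℤ ℂ H) (A : H →L[ℂ] H) : Prop :=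
  Summable (fun n : ℤ => (inner ℂ (e n) (absCLM A (e n)) : ℂ).re)

/-- The trace norm `‖A‖₁ = Tr |A|`. -/
def traceNorm (e : HilbertBasis ℤ ℂ H) (A : H →L[ℂ] H) : ℝ :=
  ∑' n : ℤ, (inner ℂ (e n) (absCLM A (e n)) : ℂ).re

/-- The trace of a (trace-class) operator: `Tr A = ∑ₙ ⟨eₙ, A eₙ⟩`. -/
def traceOp (e : HilbertBasis ℤ ℂ H) (A : H →L[ℂ] H) : ℂ :=
  ∑' n : ℤ, (inner ℂ (e n) (A (e n)) : ℂ)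

/-- `A` is upper triangular: `⟨eₘ, A eₙ⟩ = 0` whenever `m < n`. -/
def UpperTri (e : HilbertBasis ℤ ℂ H) (A : H →L[ℂ] H) : Prop :=
  ∀ m n : ℤ, m < n → (inner ℂ (e m) (A (e n)) : ℂ) = 0

/-- All diagonal entries `⟨eₙ, A eₙ⟩` of `A` are real. -/
def RealDiag (e : HilbertBasis ℤ ℂ H) (A : H →L[ℂ] H) : Prop :=
  ∀ n : ℤ, (inner ℂ (e n) (A (e n)) : ℂ).im = 0

/-- Membership in `b₁⁺(H)`: trace-class, upper triangular, real diagonal. -/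
def InB1 (e : HilbertBasis ℤ ℂ H) (A : H →L[ℂ] H) : Prop :=
  IsTC e A ∧ UpperTri e A ∧ RealDiag e A

/-- Membership in `u₁(H)`: trace-class and skew-hermitian. -/
def InU1 (e : HilbertBasis ℤ ℂ H) (A : H →L[ℂ] H) : Prop :=
  IsTC e A ∧ SkewHerm A

/-- Membership in `b₂⁺(H)`: Hilbert–Schmidt, upper triangular, real diagonal. -/
def InB2 (e : HilbertBasis ℤ ℂ H) (A : H →L[ℂ] H) : Prop :=
  IsHS e A ∧ UpperTri e A ∧ RealDiag e A

/-- Membership in `u₂(H)`: Hilbert–Schmidt and skew-hermitian. -/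
def InU2 (e : HilbertBasis ℤ ℂ H) (A : H →L[ℂ] H) : Prop :=
  IsHS e A ∧ SkewHerm A

local notation "⟪" x ", " y "⟫" => @inner ℂ _ _ x y

/-! ### rank one operators -/

def rk (x y : H) : H →L[ℂ] H := (innerSL ℂ x).smulRight y

@[simp] lemma rk_apply (x y z : H) : rk x y z = ⟪x, z⟫ • y := rfl

lemma star_rk (x y : H) : star (rk x y) = rk y x := by
  rw [star_eq_adjoint]
  symm
  rw [eq_adjoint_iff]
  intro u v
  simp [rk, inner_smul_left, inner_smul_right, mul_comm]

lemma rk_comp_rk (x y u v : H) : rk x y * rk u v = rk u (⟪x, v⟫ • y) := by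
  ext z
  simp [mul_apply, inner_smul_right, smul_smul, mul_comm]

lemma rk_smul_right (x : H) (c : ℂ) (y : H) : rk x (c • y) = c • rk x y := by
  ext z; simp [smul_smul, mul_comm]

lemma rk_nonneg (c : ℝ) (hc : 0 ≤ c) (x : H) : 0 ≤ (c:ℂ) • rk x x := by
  rw [ContinuousLinearMap.nonneg_iff_isPositive]
  refine ⟨?_, fun z => ?_⟩
  · rw [← ContinuousLinearMap.isSelfAdjoint_iff_isSymmetric]; unfold IsSelfAdjoint; rw [star_smul, star_rk]
    simp [Complex.conj_ofReal]
  · rw [ContinuousLinearMap.reApplyInnerSelf_apply]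
    have h1 : ((c:ℂ) • rk x x) z = ((c:ℂ) * ⟪x, z⟫) • x := by
      simp only [ContinuousLinearMap.smul_apply, rk_apply, smul_smul]
    rw [h1, inner_smul_left]
    simp only [map_mul, Complex.conj_ofReal]
    have h3 : ((starRingEnd ℂ) ⟪x, z⟫) * ⟪x, z⟫ = (Complex.normSq ⟪x, z⟫ : ℂ) := by
      rw [mul_comm, Complex.mul_conj]
    rw [mul_assoc, h3, ← Complex.ofReal_mul]
    have h2 : 0 ≤ c * Complex.normSq ⟪x, z⟫ := mul_nonneg hc (Complex.normSq_nonneg _)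
    simpa using h2

lemma absCLM_smul_rk (c : ℂ) (x y : H) (hx : ‖x‖ = 1) (hy : ‖y‖ = 1) :
    absCLM (c • rk x y) = ((‖c‖:ℝ):ℂ) • rk x x := by
  have hyy : ⟪y, y⟫ = 1 := by
    rw [inner_self_eq_norm_sq_to_K, hy]; norm_num
  have hxx : ⟪x, x⟫ = 1 := by
    rw [inner_self_eq_norm_sq_to_K, hx]; norm_num
  have hb : (0:H →L[ℂ] H) ≤ ((‖c‖:ℝ):ℂ) • rk x x := rk_nonneg _ (norm_nonneg c) x
  refine CFC.sqrt_unique ?_ hb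
  rw [star_smul, star_rk, smul_mul_assoc, mul_smul_comm, rk_comp_rk, hxx, one_smul, smul_smul,
    smul_mul_assoc, mul_smul_comm, rk_comp_rk, hyy, one_smul, smul_smul]
  congr 1
  rw [Complex.star_def, RCLike.conj_mul, sq]
  rfl

variable (e : HilbertBasis ℤ ℂ H)

lemma ortho (i j : ℤ) : ⟪e i, e j⟫ = if i = j then 1 else 0 :=
  orthonormal_iff_ite.mp e.orthonormal i j

lemma eq_zero_of_entries (T : H →L[ℂ] H) (h : ∀ m n : ℤ, ⟪e m, T (e n)⟫ = 0) : T = 0 := by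
  have h1 : ∀ n : ℤ, T (e n) = 0 := by
    intro n
    have : e.repr (T (e n)) = 0 := by
      ext m
      simpa [e.repr_apply_apply] using h m n
    simpa using congrArg e.repr.symm this
  have hd : Dense (Submodule.span ℂ (Set.range e) : Set H) :=
    Submodule.dense_iff_topologicalClosure_eq_top.mpr e.dense_span
  refine ContinuousLinearMap.ext_on hd ?_
  rintro x ⟨n, rfl⟩
  simpa using h1 n

lemma entry_smul_rk (c : ℂ) (i j k l : ℤ) :
    ⟪e k, (c • rk (e i) (e j)) (e l)⟫ = if k = j ∧ l = i then c else 0 := by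
  have hil : ⟪e i, e l⟫ = if l = i then 1 else 0 := by rw [ortho]; simp [eq_comm]
  rw [show ((c • rk (e i) (e j)) (e l)) = (c * ⟪e i, e l⟫) • e j from by
    simp only [ContinuousLinearMap.smul_apply, rk_apply, smul_smul], inner_smul_right,
    hil, ortho]
  by_cases h1 : k = j <;> by_cases h2 : l = i <;> simp [h1, h2]

lemma isTC_smul_rk (c : ℂ) (i j : ℤ) : IsTC e (c • rk (e i) (e j)) := by
  unfold IsTC
  rw [absCLM_smul_rk c (e i) (e j) (e.orthonormal.1 i) (e.orthonormal.1 j)]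
  apply summable_of_ne_finset_zero (s := {i})
  intro k hk
  rw [entry_smul_rk e _ i i k k, if_neg]
  · simp
  · simp only [Finset.mem_singleton] at hk
    tauto

lemma diag_mul_smul_rk (A : H →L[ℂ] H) (c : ℂ) (i j : ℤ) (k : ℤ) :
    ⟪e k, (A * (c • rk (e i) (e j))) (e k)⟫ = (c * ⟪e i, e k⟫) * ⟪e k, A (e j)⟫ := by
  rw [ContinuousLinearMap.mul_apply, show (c • rk (e i) (e j)) (e k) = (c * ⟪e i, e k⟫) • e j
    from by simp only [ContinuousLinearMap.smul_apply, rk_apply, smul_smul], map_smul,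
    inner_smul_right]

lemma trace_mul_smul_rk (A : H →L[ℂ] H) (c : ℂ) (i j : ℤ) :
    traceOp e (A * (c • rk (e i) (e j))) = c * ⟪e i, A (e j)⟫ := by
  unfold traceOp
  rw [tsum_eq_single i]
  · rw [diag_mul_smul_rk e, ortho, if_pos rfl, mul_one]
  · intro k hk
    rw [diag_mul_smul_rk e, ortho, if_neg (fun h => hk h.symm), mul_zero, zero_mul]

lemma diag_rk_mul (B : H →L[ℂ] H) (i j : ℤ) (k : ℤ) :
    ⟪e k, (rk (e i) (e j) * B) (e k)⟫ = ⟪e i, B (e k)⟫ * ⟪e k, e j⟫ := by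
  rw [ContinuousLinearMap.mul_apply, rk_apply, inner_smul_right]

lemma trace_rk_mul (B : H →L[ℂ] H) (i j : ℤ) :
    traceOp e (rk (e i) (e j) * B) = ⟪e i, B (e j)⟫ := by
  unfold traceOp
  rw [tsum_eq_single j]
  · rw [diag_rk_mul e, ortho, if_pos rfl, mul_one]
  · intro k hk
    rw [diag_rk_mul e, ortho, if_neg hk, mul_zero]

lemma skew_entry {A : H →L[ℂ] H} (hA : SkewHerm A) (x y : H) :
    ⟪x, A y⟫ = -(starRingEnd ℂ) ⟪y, A x⟫ := by
  have h1 : ⟪adjoint A x, y⟫ = ⟪x, A y⟫ := ContinuousLinearMap.adjoint_inner_left A y x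
  rw [← star_eq_adjoint] at h1
  rw [hA] at h1
  rw [← h1]
  simp only [ContinuousLinearMap.neg_apply, inner_neg_left, neg_inj]
  exact (inner_conj_symm _ _).symm

lemma inB1_smul_rk (c : ℂ) (i j : ℤ) (hij : ¬ j < i) (hc : i = j → c.im = 0) :
    InB1 e (c • rk (e i) (e j)) := by
  refine ⟨isTC_smul_rk e c i j, ?_, ?_⟩
  · intro k l hkl
    rw [entry_smul_rk e, if_neg]
    rintro ⟨rfl, rfl⟩
    exact hij hkl
  · intro k
    rw [entry_smul_rk e]
    by_cases hk : k = j ∧ k = i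
    · rw [if_pos hk]
      exact hc (hk.2.symm.trans hk.1)
    · rw [if_neg hk]
      simp

lemma part2 (A : H →L[ℂ] H) (hA : SkewHerm A)
    (h : ∀ B : H →L[ℂ] H, InB1 e B → (traceOp e (A * B)).im = 0) : A = 0 := by
  have key : ∀ i j : ℤ, i ≤ j → ∀ c : ℂ, (i = j → c.im = 0) →
      (c * ⟪e i, A (e j)⟫).im = 0 := by
    intro i j hij c hc
    have hB := inB1_smul_rk e c i j (not_lt.mpr hij) hc
    have := h _ hB
    rwa [trace_mul_smul_rk] at this
  have hlt : ∀ i j : ℤ, i < j → ⟪e i, A (e j)⟫ = 0 := by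
    intro i j hij
    have h1 := key i j hij.le 1 (fun h' => by simp)
    have h2 := key i j hij.le Complex.I (fun h' => absurd h' hij.ne)
    rw [one_mul] at h1
    rw [Complex.I_mul_im] at h2
    exact Complex.ext h2 h1
  have hdiag : ∀ i : ℤ, ⟪e i, A (e i)⟫ = 0 := by
    intro i
    have h1 := key i i le_rfl 1 (fun _ => by simp)
    rw [one_mul] at h1
    have h2 : ⟪e i, A (e i)⟫ = -(starRingEnd ℂ) ⟪e i, A (e i)⟫ := skew_entry hA _ _
    have h3 : (⟪e i, A (e i)⟫ : ℂ).re = 0 := by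
      have := congrArg Complex.re h2
      simp only [Complex.neg_re, Complex.conj_re] at this
      linarith
    exact Complex.ext h3 h1
  apply eq_zero_of_entries e
  intro m n
  rcases lt_trichotomy m n with hmn | hmn | hmn
  · exact hlt m n hmn
  · exact hmn ▸ hdiag m
  · rw [skew_entry hA, hlt n m hmn]
    simp

lemma summable_diag_rk_mul (B : H →L[ℂ] H) (i j : ℤ) :
    Summable (fun n : ℤ => ⟪e n, (rk (e i) (e j) * B) (e n)⟫) := by
  apply summable_of_ne_finset_zero (s := {j})
  intro k hk
  rw [diag_rk_mul, ortho, if_neg (by simpa using hk), mul_zero]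

lemma trace_add_mul (S T B : H →L[ℂ] H)
    (hS : Summable (fun n : ℤ => ⟪e n, (S * B) (e n)⟫))
    (hT : Summable (fun n : ℤ => ⟪e n, (T * B) (e n)⟫)) :
    traceOp e ((S + T) * B) = traceOp e (S * B) + traceOp e (T * B) := by
  unfold traceOp
  rw [← Summable.tsum_add hS hT]
  apply tsum_congr
  intro n
  rw [add_mul]
  simp [inner_add_right]

lemma trace_smul_mul (c : ℂ) (T B : H →L[ℂ] H) :
    traceOp e ((c • T) * B) = c * traceOp e (T * B) := by
  unfold traceOp
  rw [← tsum_mul_left]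
  apply tsum_congr
  intro n
  rw [smul_mul_assoc]
  simp [inner_smul_right]

lemma trace_sub_mul (S T B : H →L[ℂ] H)
    (hS : Summable (fun n : ℤ => ⟪e n, (S * B) (e n)⟫))
    (hT : Summable (fun n : ℤ => ⟪e n, (T * B) (e n)⟫)) :
    traceOp e ((S - T) * B) = traceOp e (S * B) - traceOp e (T * B) := by
  unfold traceOp
  rw [← Summable.tsum_sub hS hT]
  apply tsum_congr
  intro n
  rw [sub_mul]
  simp [inner_sub_right]

lemma part3 (B : H →L[ℂ] H) (hB : InB1 e B)
    (h : ∀ A : H →L[ℂ] H, SkewHerm A → (traceOp e (A * B)).im = 0) : B = 0 := by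
  apply eq_zero_of_entries e
  have hdiag : ∀ n : ℤ, ⟪e n, B (e n)⟫ = 0 := by
    intro n
    have hskew : SkewHerm (Complex.I • rk (e n) (e n)) := by
      unfold SkewHerm
      rw [star_smul, star_rk]
      simp [Complex.conj_I, neg_smul]
    have := h _ hskew
    rw [trace_smul_mul, trace_rk_mul, Complex.I_mul_im] at this
    exact Complex.ext this (hB.2.2 n)
  intro m n
  rcases lt_trichotomy m n with hmn | hmn | hmn
  · exact hB.2.1 m n hmn
  · exact hmn ▸ hdiag m
  · -- m > n
    have hz : ⟪e n, B (e m)⟫ = 0 := hB.2.1 n m hmn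
    have hskew1 : SkewHerm (Complex.I • (rk (e m) (e n) + rk (e n) (e m))) := by
      unfold SkewHerm
      rw [star_smul, star_add, star_rk, star_rk]
      simp only [Complex.star_def, Complex.conj_I, neg_smul]
      rw [add_comm]
    have hskew2 : SkewHerm (rk (e m) (e n) - rk (e n) (e m)) := by
      unfold SkewHerm
      rw [star_sub, star_rk, star_rk, neg_sub]
    have h1 := h _ hskew1
    rw [trace_smul_mul, trace_add_mul e _ _ _ (summable_diag_rk_mul e B m n)
      (summable_diag_rk_mul e B n m), trace_rk_mul, trace_rk_mul, hz, add_zero,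
      Complex.I_mul_im] at h1
    have h2 := h _ hskew2
    rw [trace_sub_mul e _ _ _ (summable_diag_rk_mul e B m n) (summable_diag_rk_mul e B n m),
      trace_rk_mul, trace_rk_mul, hz, sub_zero] at h2
    exact Complex.ext h1 h2

/-! ### part 1 helpers -/

lemma re_inner_self (x : H) : (⟪x, x⟫ : ℂ).re = ‖x‖^2 := by
  simpa using inner_self_eq_norm_sq (𝕜 := ℂ) x

lemma apply_norm_sq (T : H →L[ℂ] H) (x : H) : ‖T x‖^2 = (⟪x, (star T * T) x⟫ : ℂ).re := by
  rw [ContinuousLinearMap.mul_apply, star_eq_adjoint, ContinuousLinearMap.adjoint_inner_right,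
    re_inner_self]

lemma inner_re_mono {T S : H →L[ℂ] H} (h : T ≤ S) (x : H) :
    (⟪x, T x⟫ : ℂ).re ≤ (⟪x, S x⟫ : ℂ).re := by
  have h1 := (ContinuousLinearMap.le_def T S).mp h
  have h2 := h1.inner_nonneg_right x
  simp only [ContinuousLinearMap.sub_apply, inner_sub_right] at h2
  have h3 : (0:ℝ) ≤ (⟪x, S x⟫ : ℂ).re - (⟪x, T x⟫ : ℂ).re := by simpa using (Complex.nonneg_iff.mp h2).1
  linarith

lemma inner_re_nonneg {T : H →L[ℂ] H} (h : 0 ≤ T) (x : H) : 0 ≤ (⟪x, T x⟫ : ℂ).re := by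
  have := inner_re_mono (H := H) h x
  simpa using this

lemma parseval (x : H) : HasSum (fun i : ℤ => ‖⟪e i, x⟫‖^2) (‖x‖^2) := by
  have h := (e.hasSum_inner_mul_inner x x).mapL Complex.reCLM
  have h1 : (fun i : ℤ => Complex.reCLM (⟪x, e i⟫ * ⟪e i, x⟫)) = fun i : ℤ => ‖⟪e i, x⟫‖^2 := by
    funext i
    rw [← inner_conj_symm (e i) x, RCLike.mul_conj]
    simp [RCLike.norm_conj, ← Complex.ofReal_pow, norm_inner_symm x]
  have h2 : Complex.reCLM ⟪x, x⟫ = ‖x‖^2 := by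
    simpa using re_inner_self x
  rw [h1, h2] at h
  exact h

lemma finsum_bound (A B : H →L[ℂ] H) (hB : IsTC e B) (F : Finset ℤ) :
    ‖∑ n ∈ F, ⟪e n, (A * B) (e n)⟫‖ ≤ ‖A‖ * traceNorm e B := by
  classical
  set P : H →L[ℂ] H := absCLM B with hPdef
  have hP : (0:H →L[ℂ] H) ≤ P := CFC.sqrt_nonneg _
  have hPsa : IsSelfAdjoint P := IsSelfAdjoint.of_nonneg hP
  have hPP : P * P = star B * B := CFC.sqrt_mul_sqrt_self _ (star_mul_self_nonneg B)
  have hspec : ∀ t ∈ spectrum ℝ P, 0 ≤ t := fun t ht => spectrum_nonneg_of_nonneg hP ht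
  have hBP : ∀ x : H, ‖B x‖ = ‖P x‖ := by
    intro x
    have h1 : ‖B x‖^2 = ‖P x‖^2 := by
      rw [apply_norm_sq, apply_norm_sq, ← hPP, hPsa.star_eq]
    have := congrArg Real.sqrt h1
    rwa [Real.sqrt_sq (norm_nonneg _), Real.sqrt_sq (norm_nonneg _)] at this
  set X : H →L[ℂ] H := cfc Real.sqrt P with hXdef
  have hsqrtcont : ContinuousOn Real.sqrt (spectrum ℝ P) := Real.continuous_sqrt.continuousOn
  have hXsa : IsSelfAdjoint X := cfc_predicate _ _
  have hXX : X * X = P := by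
    rw [hXdef, ← cfc_mul Real.sqrt Real.sqrt P hsqrtcont hsqrtcont]
    have heq : cfc (fun x : ℝ => Real.sqrt x * Real.sqrt x) P = cfc (id : ℝ → ℝ) P :=
      cfc_congr (fun t ht => Real.mul_self_sqrt (hspec t ht))
    rw [heq]
    exact cfc_id ℝ P hPsa
  have hXnorm : ∀ x : H, ‖X x‖^2 = (⟪x, P x⟫ : ℂ).re := by
    intro x
    rw [apply_norm_sq, hXsa.star_eq, hXX]
  have hsumX : Summable (fun n : ℤ => ‖X (e n)‖^2) := by
    refine Summable.congr hB ?_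
    intro n
    rw [hXnorm]
  have hTrX : ∑' n : ℤ, ‖X (e n)‖^2 = traceNorm e B := by
    apply tsum_congr
    intro n
    rw [hXnorm]
  have hTr0 : 0 ≤ traceNorm e B := by
    rw [← hTrX]
    exact tsum_nonneg (fun n => sq_nonneg _)
  have main : ∀ ε : ℝ, 0 < ε →
      ‖∑ n ∈ F, ⟪e n, (A * B) (e n)⟫‖ ≤ ‖A‖ * traceNorm e B +
        Real.sqrt ε * (‖A‖ * ∑ n ∈ F, ‖X (e n)‖) := by
    intro ε hε
    set gf : ℝ → ℝ := fun t => Real.sqrt t * (t + ε)⁻¹ with hgf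
    have hne : ∀ t ∈ spectrum ℝ P, t + ε ≠ 0 := by
      intro t ht
      have := hspec t ht
      positivity
    have hinvcont : ContinuousOn (fun t : ℝ => (t + ε)⁻¹) (spectrum ℝ P) :=
      ((continuous_id.add continuous_const).continuousOn).inv₀ hne
    have hgcont : ContinuousOn gf (spectrum ℝ P) :=
      (Real.continuous_sqrt.continuousOn).mul hinvcont
    set G : H →L[ℂ] H := cfc gf P with hGdef
    set C : H →L[ℂ] H := B * G with hCdef
    set kf : ℝ → ℝ := fun t => ε * (t + ε)⁻¹ with hkf
    have hkcont : ContinuousOn kf (spectrum ℝ P) := continuousOn_const.mul hinvcont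
    set Ee : H →L[ℂ] H := B * cfc kf P with hEedef
    have hdec : B = C * X + Ee := by
      have h1 : G * X = cfc (fun t => gf t * Real.sqrt t) P :=
        (cfc_mul gf Real.sqrt P hgcont hsqrtcont).symm
      have h2 : G * X + cfc kf P = cfc (fun t => gf t * Real.sqrt t + kf t) P := by
        rw [h1, ← cfc_add P (fun t => gf t * Real.sqrt t) kf (hgcont.mul hsqrtcont) hkcont]
      have h3 : cfc (fun t => gf t * Real.sqrt t + kf t) P = cfc (fun _ : ℝ => (1:ℝ)) P := by
        apply cfc_congr
        intro t ht
        have h0 := hspec t ht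
        have hs : Real.sqrt t * Real.sqrt t = t := Real.mul_self_sqrt h0
        have hd : t + ε ≠ 0 := hne t ht
        simp only [hgf, hkf]
        rw [show Real.sqrt t * (t + ε)⁻¹ * Real.sqrt t + ε * (t + ε)⁻¹ =
          (Real.sqrt t * Real.sqrt t + ε) * (t + ε)⁻¹ by ring, hs]
        exact mul_inv_cancel₀ hd
      have h4 : cfc (fun _ : ℝ => (1:ℝ)) P = 1 := by
        rw [cfc_const 1 P hPsa]
        simp
      rw [hCdef, hEedef, mul_assoc, ← mul_add, h2, h3, h4, mul_one]
    have hCle : ∀ x : H, ‖C x‖^2 ≤ ‖X x‖^2 := by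
      intro x
      have h1 : ‖C x‖ = ‖(P * G) x‖ := by
        rw [hCdef, ContinuousLinearMap.mul_apply, hBP, ← ContinuousLinearMap.mul_apply]
      have hPG : P * G = cfc (fun t => t * gf t) P := by
        have := cfc_mul (fun t : ℝ => t) gf P continuousOn_id hgcont
        rw [cfc_id' ℝ P hPsa] at this
        exact this.symm
      have hsa2 : IsSelfAdjoint (cfc (fun t : ℝ => t * gf t) P) := cfc_predicate _ _
      have hsq : ‖C x‖^2 = (⟪x, (cfc (fun t : ℝ => t * gf t) P * cfc (fun t : ℝ => t * gf t) P) x⟫ : ℂ).re := by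
        rw [h1, hPG, apply_norm_sq, hsa2.star_eq]
      have hmul : cfc (fun t : ℝ => t * gf t) P * cfc (fun t : ℝ => t * gf t) P =
          cfc (fun t : ℝ => (t * gf t) * (t * gf t)) P :=
        (cfc_mul _ _ P (continuousOn_id.mul hgcont) (continuousOn_id.mul hgcont)).symm
      have hle : cfc (fun t : ℝ => (t * gf t) * (t * gf t)) P ≤ cfc (fun t : ℝ => t) P := by
        refine cfc_mono ?_ ((continuousOn_id.mul hgcont).mul (continuousOn_id.mul hgcont))
          continuousOn_id
        intro t ht
        have h0 := hspec t ht
        have hs : Real.sqrt t * Real.sqrt t = t := Real.mul_self_sqrt h0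
        have hd : 0 < t + ε := by positivity
        simp only [hgf]
        rw [show t * (Real.sqrt t * (t + ε)⁻¹) * (t * (Real.sqrt t * (t + ε)⁻¹)) =
          (t * t * (Real.sqrt t * Real.sqrt t)) * ((t + ε)⁻¹ * (t + ε)⁻¹) by ring, hs,
          ← mul_inv, ← div_eq_mul_inv, div_le_iff₀ (by positivity)]
        nlinarith [mul_nonneg h0 (mul_nonneg h0 hε.le), mul_nonneg h0 (mul_nonneg hε.le hε.le)]
      have hfin : (⟪x, (cfc (fun t : ℝ => (t * gf t) * (t * gf t)) P) x⟫ : ℂ).re ≤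
          (⟪x, P x⟫ : ℂ).re := by
        have := inner_re_mono (le_trans hle (le_of_eq (cfc_id' ℝ P hPsa))) x
        exact this
      rw [hsq, hmul, hXnorm]
      exact hfin
    have hEe : ∀ x : H, ‖Ee x‖ ≤ Real.sqrt ε * ‖X x‖ := by
      intro x
      have h1 : ‖Ee x‖ = ‖(P * cfc kf P) x‖ := by
        rw [hEedef, ContinuousLinearMap.mul_apply, hBP, ← ContinuousLinearMap.mul_apply]
      have hPK : P * cfc kf P = cfc (fun t => t * kf t) P := by
        have := cfc_mul (fun t : ℝ => t) kf P continuousOn_id hkcont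
        rw [cfc_id' ℝ P hPsa] at this
        exact this.symm
      have hsa2 : IsSelfAdjoint (cfc (fun t : ℝ => t * kf t) P) := cfc_predicate _ _
      have hmul2 : cfc (fun t : ℝ => t * kf t) P * cfc (fun t : ℝ => t * kf t) P =
          cfc (fun t : ℝ => (t * kf t) * (t * kf t)) P :=
        (cfc_mul _ _ P (continuousOn_id.mul hkcont) (continuousOn_id.mul hkcont)).symm
      have hsq : ‖Ee x‖^2 = (⟪x, (cfc (fun t : ℝ => (t * kf t) * (t * kf t)) P) x⟫ : ℂ).re := by
        rw [h1, hPK, apply_norm_sq, hsa2.star_eq, hmul2]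
      have hle : cfc (fun t : ℝ => (t * kf t) * (t * kf t)) P ≤ cfc (fun t : ℝ => ε * t) P := by
        refine cfc_mono ?_ ((continuousOn_id.mul hkcont).mul (continuousOn_id.mul hkcont))
          (continuousOn_const.mul continuousOn_id)
        intro t ht
        have h0 := hspec t ht
        have hd : 0 < t + ε := by positivity
        simp only [hkf]
        rw [show t * (ε * (t + ε)⁻¹) * (t * (ε * (t + ε)⁻¹)) =
          (t * t * (ε * ε)) * ((t + ε)⁻¹ * (t + ε)⁻¹) by ring,
          ← mul_inv, ← div_eq_mul_inv, div_le_iff₀ (by positivity)]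
        nlinarith [mul_nonneg (mul_nonneg hε.le h0) (mul_nonneg h0 h0),
          mul_nonneg (mul_nonneg hε.le h0) (mul_nonneg h0 hε.le),
          mul_nonneg (mul_nonneg hε.le h0) (mul_nonneg hε.le hε.le)]
      have hsmul : cfc (fun t : ℝ => ε * t) P = ε • P := by
        have := cfc_const_mul ε (fun t : ℝ => t) P continuousOn_id
        rw [cfc_id' ℝ P hPsa] at this
        exact this
      have hsq2 : ‖Ee x‖^2 ≤ ε * ‖X x‖^2 := by
        rw [hsq, hXnorm]
        have h2 := inner_re_mono (hle.trans (le_of_eq hsmul)) x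
        have h3 : (⟪x, (ε • P) x⟫ : ℂ).re = ε * (⟪x, P x⟫ : ℂ).re := by
          rw [ContinuousLinearMap.smul_apply, RCLike.real_smul_eq_coe_smul (K := ℂ),
            inner_smul_right]
          simp
        rw [h3] at h2
        exact le_trans (le_of_eq rfl) h2
      have := Real.sqrt_le_sqrt hsq2
      rwa [Real.sqrt_sq (norm_nonneg _), Real.sqrt_mul hε.le, Real.sqrt_sq (norm_nonneg _)] at this
    set Mo : H →L[ℂ] H := A * C with hMo
    set W : H →L[ℂ] H := star Mo with hW
    have hMox : ∀ m : ℤ, ‖Mo (e m)‖^2 ≤ ‖A‖^2 * ‖X (e m)‖^2 := by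
      intro m
      have h1 : ‖Mo (e m)‖ ≤ ‖A‖ * ‖C (e m)‖ := by
        rw [hMo, ContinuousLinearMap.mul_apply]
        exact A.le_opNorm _
      have h2 : ‖C (e m)‖^2 ≤ ‖X (e m)‖^2 := hCle _
      have h3 : ‖Mo (e m)‖^2 ≤ (‖A‖ * ‖C (e m)‖)^2 :=
        pow_le_pow_left₀ (norm_nonneg _) h1 2
      calc ‖Mo (e m)‖^2 ≤ (‖A‖ * ‖C (e m)‖)^2 := h3
        _ = ‖A‖^2 * ‖C (e m)‖^2 := by ring
        _ ≤ ‖A‖^2 * ‖X (e m)‖^2 := by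
            exact mul_le_mul_of_nonneg_left h2 (sq_nonneg _)
    have hMosum : Summable (fun m : ℤ => ‖Mo (e m)‖^2) :=
      Summable.of_nonneg_of_le (fun m => sq_nonneg _) hMox (hsumX.mul_left (‖A‖^2))
    have hrw : ∀ n m : ℤ, ‖⟪e m, W (e n)⟫‖ = ‖⟪e n, Mo (e m)⟫‖ := by
      intro n m
      rw [hW, star_eq_adjoint, ContinuousLinearMap.adjoint_inner_right, norm_inner_symm]
    have hWhas : ∀ n : ℤ, HasSum (fun m : ℤ => ‖⟪e n, Mo (e m)⟫‖^2) (‖W (e n)‖^2) := by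
      intro n
      have hp := parseval e (W (e n))
      rwa [show (fun i : ℤ => ‖⟪e i, W (e n)⟫‖^2) = fun m : ℤ => ‖⟪e n, Mo (e m)⟫‖^2 from
        funext fun m => by rw [hrw]] at hp
    have hle1 : ∀ m : ℤ, ∑ n ∈ F, ‖⟪e n, Mo (e m)⟫‖^2 ≤ ‖Mo (e m)‖^2 := by
      intro m
      have hp := parseval e (Mo (e m))
      calc ∑ n ∈ F, ‖⟪e n, Mo (e m)⟫‖^2 ≤ ∑' n : ℤ, ‖⟪e n, Mo (e m)⟫‖^2 :=
            Summable.sum_le_tsum F (fun i _ => sq_nonneg _) hp.summable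
        _ = ‖Mo (e m)‖^2 := hp.tsum_eq
    have hsum1 : Summable (fun m : ℤ => ∑ n ∈ F, ‖⟪e n, Mo (e m)⟫‖^2) :=
      Summable.of_nonneg_of_le (fun m => Finset.sum_nonneg fun _ _ => sq_nonneg _) hle1 hMosum
    have hswap : ∑ n ∈ F, ‖W (e n)‖^2 = ∑' m : ℤ, ∑ n ∈ F, ‖⟪e n, Mo (e m)⟫‖^2 := by
      rw [Summable.tsum_finsetSum (fun n _ => (hWhas n).summable)]
      exact (Finset.sum_congr rfl fun n _ => (hWhas n).tsum_eq).symm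
    have hWF : ∑ n ∈ F, ‖W (e n)‖^2 ≤ ‖A‖^2 * traceNorm e B := by
      calc ∑ n ∈ F, ‖W (e n)‖^2 = ∑' m : ℤ, ∑ n ∈ F, ‖⟪e n, Mo (e m)⟫‖^2 := hswap
        _ ≤ ∑' m : ℤ, ‖Mo (e m)‖^2 := Summable.tsum_le_tsum hle1 hsum1 hMosum
        _ ≤ ∑' m : ℤ, ‖A‖^2 * ‖X (e m)‖^2 := Summable.tsum_le_tsum hMox hMosum (hsumX.mul_left _)
        _ = ‖A‖^2 * traceNorm e B := by rw [tsum_mul_left, hTrX]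
    have hdecn : ∀ n : ℤ, ⟪e n, (A * B) (e n)⟫ = ⟪W (e n), X (e n)⟫ + ⟪e n, A (Ee (e n))⟫ := by
      intro n
      have h1 : (A * B) (e n) = A ((C * X) (e n)) + A (Ee (e n)) := by
        rw [ContinuousLinearMap.mul_apply]
        conv_lhs => rw [hdec]
        rw [ContinuousLinearMap.add_apply, map_add]
      rw [h1, inner_add_right]
      congr 1
      rw [ContinuousLinearMap.mul_apply,
        show A (C (X (e n))) = Mo (X (e n)) from by rw [hMo]; rfl, hW, star_eq_adjoint]
      exact (ContinuousLinearMap.adjoint_inner_left Mo (X (e n)) (e n)).symm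
    rw [show ∑ n ∈ F, ⟪e n, (A * B) (e n)⟫ =
      (∑ n ∈ F, ⟪W (e n), X (e n)⟫) + ∑ n ∈ F, ⟪e n, A (Ee (e n))⟫ from by
        rw [← Finset.sum_add_distrib]
        exact Finset.sum_congr rfl fun n _ => hdecn n]
    refine (norm_add_le _ _).trans ?_
    have hXF : ∑ n ∈ F, ‖X (e n)‖^2 ≤ traceNorm e B := by
      rw [← hTrX]
      exact Summable.sum_le_tsum F (fun i _ => sq_nonneg _) hsumX
    have hfirst : ‖∑ n ∈ F, ⟪W (e n), X (e n)⟫‖ ≤ ‖A‖ * traceNorm e B := by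
      refine (norm_sum_le F _).trans ?_
      have hstep1 : ∑ n ∈ F, ‖⟪W (e n), X (e n)⟫‖ ≤ ∑ n ∈ F, ‖W (e n)‖ * ‖X (e n)‖ :=
        Finset.sum_le_sum fun n _ => norm_inner_le_norm _ _
      have hcs := Finset.sum_mul_sq_le_sq_mul_sq F (fun n => ‖W (e n)‖) (fun n => ‖X (e n)‖)
      have hb : (∑ n ∈ F, ‖W (e n)‖^2) * ∑ n ∈ F, ‖X (e n)‖^2 ≤
          (‖A‖^2 * traceNorm e B) * traceNorm e B := by
        apply mul_le_mul hWF hXF (Finset.sum_nonneg fun _ _ => sq_nonneg _)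
        positivity
      have hsq : (∑ n ∈ F, ‖W (e n)‖ * ‖X (e n)‖)^2 ≤ (‖A‖ * traceNorm e B)^2 := by
        calc (∑ n ∈ F, ‖W (e n)‖ * ‖X (e n)‖)^2 ≤
            (∑ n ∈ F, ‖W (e n)‖^2) * ∑ n ∈ F, ‖X (e n)‖^2 := hcs
          _ ≤ (‖A‖^2 * traceNorm e B) * traceNorm e B := hb
          _ = (‖A‖ * traceNorm e B)^2 := by ring
      have hnn : (0:ℝ) ≤ ∑ n ∈ F, ‖W (e n)‖ * ‖X (e n)‖ :=
        Finset.sum_nonneg fun _ _ => mul_nonneg (norm_nonneg _) (norm_nonneg _)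
      have h5 := Real.sqrt_le_sqrt hsq
      rw [Real.sqrt_sq hnn, Real.sqrt_sq (by positivity)] at h5
      linarith
    have hsecond : ‖∑ n ∈ F, ⟪e n, A (Ee (e n))⟫‖ ≤
        Real.sqrt ε * (‖A‖ * ∑ n ∈ F, ‖X (e n)‖) := by
      refine (norm_sum_le F _).trans ?_
      have hterm : ∀ n ∈ F, ‖⟪e n, A (Ee (e n))⟫‖ ≤ Real.sqrt ε * (‖A‖ * ‖X (e n)‖) := by
        intro n _
        have h1 : ‖⟪e n, A (Ee (e n))⟫‖ ≤ ‖e n‖ * ‖A (Ee (e n))‖ := norm_inner_le_norm _ _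
        have h2 : ‖(e n : H)‖ = 1 := e.orthonormal.1 n
        have h3 : ‖A (Ee (e n))‖ ≤ ‖A‖ * ‖Ee (e n)‖ := A.le_opNorm _
        have h4 := hEe (e n)
        have h6 : ‖A‖ * ‖Ee (e n)‖ ≤ ‖A‖ * (Real.sqrt ε * ‖X (e n)‖) :=
          mul_le_mul_of_nonneg_left h4 (norm_nonneg _)
        rw [h2, one_mul] at h1
        calc ‖⟪e n, A (Ee (e n))⟫‖ ≤ ‖A (Ee (e n))‖ := h1
          _ ≤ ‖A‖ * ‖Ee (e n)‖ := h3
          _ ≤ ‖A‖ * (Real.sqrt ε * ‖X (e n)‖) := h6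
          _ = Real.sqrt ε * (‖A‖ * ‖X (e n)‖) := by ring
      calc ∑ n ∈ F, ‖⟪e n, A (Ee (e n))⟫‖ ≤ ∑ n ∈ F, Real.sqrt ε * (‖A‖ * ‖X (e n)‖) :=
            Finset.sum_le_sum hterm
        _ = Real.sqrt ε * (‖A‖ * ∑ n ∈ F, ‖X (e n)‖) := by
            rw [← Finset.mul_sum, ← Finset.mul_sum]
    linarith
  refine le_of_forall_pos_le_add ?_
  intro δ hδ
  set K : ℝ := ‖A‖ * ∑ n ∈ F, ‖X (e n)‖ with hK
  have hK0 : 0 ≤ K :=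
    mul_nonneg (norm_nonneg _) (Finset.sum_nonneg fun _ _ => norm_nonneg _)
  have hε : (0:ℝ) < (δ / (K+1))^2 := by positivity
  have h := main _ hε
  rw [Real.sqrt_sq (by positivity)] at h
  have hKK : δ / (K+1) * K ≤ δ := by
    rw [div_mul_eq_mul_div, div_le_iff₀ (by linarith)]
    nlinarith
  linarith

lemma summable_of_bounded_sums (g : ℤ → ℝ) (M : ℝ)
    (h : ∀ F : Finset ℤ, |∑ n ∈ F, g n| ≤ M) : Summable g := by
  have key : ∀ g' : ℤ → ℝ, (∀ F : Finset ℤ, |∑ n ∈ F, g' n| ≤ M) →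
      Summable (fun n => max (g' n) 0) := by
    intro g' h'
    refine summable_of_sum_le (c := M) ?_ ?_
    · intro n
      exact le_max_right _ _
    · intro u
      classical
      have h1 : ∑ x ∈ u, max (g' x) 0 = ∑ x ∈ u.filter (fun n => 0 ≤ g' n), g' x := by
        rw [Finset.sum_filter]
        apply Finset.sum_congr rfl
        intro x _
        rcases le_total 0 (g' x) with hx | hx
        · rw [max_eq_left hx, if_pos hx]
        · rw [max_eq_right hx]
          by_cases h0 : 0 ≤ g' x
          · rw [if_pos h0]
            linarith
          · rw [if_neg h0]
      rw [h1]
      exact (le_abs_self _).trans (h' _)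
  have hpos := key g h
  have hneg := key (fun n => - g n) (by
    intro F
    rw [show ∑ n ∈ F, - g n = -∑ n ∈ F, g n from Finset.sum_neg_distrib g, abs_neg]
    exact h F)
  have := hpos.sub hneg
  refine this.congr ?_
  intro n
  exact max_zero_sub_max_neg_zero_eq_self (g n)

lemma bound_of_bounded_sums (f : ℤ → ℂ) (M : ℝ)
    (h : ∀ F : Finset ℤ, ‖∑ n ∈ F, f n‖ ≤ M) : |(∑' n : ℤ, f n).im| ≤ M := by
  have hre : ∀ F : Finset ℤ, |∑ n ∈ F, (f n).re| ≤ M := by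
    intro F
    rw [show ∑ n ∈ F, (f n).re = (∑ n ∈ F, f n).re from by
      rw [Complex.re_sum]]
    exact (Complex.abs_re_le_norm _).trans (by simpa using h F)
  have him : ∀ F : Finset ℤ, |∑ n ∈ F, (f n).im| ≤ M := by
    intro F
    rw [show ∑ n ∈ F, (f n).im = (∑ n ∈ F, f n).im from by
      rw [Complex.im_sum]]
    exact (Complex.abs_im_le_norm _).trans (by simpa using h F)
  have hsre : Summable (fun n : ℤ => (f n).re) := summable_of_bounded_sums _ M hre
  have hsim : Summable (fun n : ℤ => (f n).im) := summable_of_bounded_sums _ M him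
  have hf : Summable f := by
    refine ⟨Complex.mk (∑' n : ℤ, (f n).re) (∑' n : ℤ, (f n).im), ?_⟩
    rw [Complex.hasSum_iff]
    exact ⟨hsre.hasSum, hsim.hasSum⟩
  have ht := hf.hasSum
  have hnorm : ‖∑' n : ℤ, f n‖ ≤ M :=
    le_of_tendsto ht.norm (Filter.Eventually.of_forall h)
  exact (Complex.abs_im_le_norm _).trans (by simpa using hnorm)

/-- The real bilinear map `u(H) × b₁⁺(H) → ℝ`, `(A, B) ↦ Im Tr(AB)`, is
continuous (bounded) and non-degenerate in both arguments. -/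
theorem statement_0 {H : Type*} [NormedAddCommGroup H] [InnerProductSpace ℂ H]
    [CompleteSpace H] (e : HilbertBasis ℤ ℂ H) :
    (∃ c : ℝ, ∀ A B : H →L[ℂ] H, SkewHerm A → InB1 e B →
      |(traceOp e (A * B)).im| ≤ c * ‖A‖ * traceNorm e B) ∧
    (∀ A : H →L[ℂ] H, SkewHerm A →
      (∀ B : H →L[ℂ] H, InB1 e B → (traceOp e (A * B)).im = 0) → A = 0) ∧
    (∀ B : H →L[ℂ] H, InB1 e B →
      (∀ A : H →L[ℂ] H, SkewHerm A → (traceOp e (A * B)).im = 0) → B = 0) := by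
  refine ⟨⟨1, ?_⟩, part2 e, part3 e⟩
  intro A B _ hB
  have hb := fun F : Finset ℤ => finsum_bound e A B hB.1 F
  have h := bound_of_bounded_sums (fun n : ℤ => (inner ℂ (e n) ((A * B) (e n)) : ℂ))
    (‖A‖ * traceNorm e B) hb
  rw [one_mul]
  exact h

end PL
end
end

section
/- The Banach space L₂(H) of Hilbert–Schmidt operators decomposes as the direct sum L₂(H) = u₂(H) ⊕ b₂⁺(H): every Hilbert–Schmidt operator x can be written uniquely as x = u + b with u a skew-hermitian Hilbert–Schmidt operator and b ∈ b₂⁺(H), and the corresponding projections p_{u₂} and p_{b₂⁺} are bounded linear operators on L₂(H). -/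
/- Setting: `H` is a separable complex Hilbert space with a fixed orthonormal
(Hilbert) basis `e` indexed by `ℤ`. -/

set_option synthInstance.maxHeartbeats 1000000
set_option maxHeartbeats 2000000

noncomputable section
open ContinuousLinearMap

namespace PL

variable {H : Type*} [NormedAddCommGroup H] [InnerProductSpace ℂ H] [CompleteSpace H]

set_option linter.unusedSectionVars false

local notation "ℓ²" => lp (fun _ : ℤ => ℂ) 2

lemma lp_norm_sq (c : ℓ²) : ‖c‖ ^ 2 = ∑' i, ‖c i‖ ^ 2 := by
  have h := lp.norm_rpow_eq_tsum (p := 2) (by norm_num) c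
  simp only [ENNReal.toReal_ofNat] at h
  rw [← Real.rpow_natCast ‖c‖ 2]
  push_cast
  rw [h]
  congr 1; ext i; rw [← Real.rpow_natCast ‖c i‖ 2]; push_cast; ring_nf

lemma lp_summable_sq (c : ℓ²) : Summable fun i => ‖c i‖ ^ 2 := by
  have := lp.memℓp c
  rw [memℓp_gen_iff (p := 2) (by norm_num)] at this
  simpa using this

lemma memℓp_two_of_sq {c : ℤ → ℂ} (h : Summable fun i => ‖c i‖ ^ 2) : Memℓp c 2 := by
  apply memℓp_gen
  simp only [ENNReal.toReal_ofNat]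
  convert h using 2 with i
  rw [← Real.rpow_natCast ‖c i‖ 2]; push_cast; ring_nf

lemma hb_norm_sq (e : HilbertBasis ℤ ℂ H) (v : H) :
    ‖v‖ ^ 2 = ∑' m : ℤ, ‖(inner ℂ (e m) v : ℂ)‖ ^ 2 := by
  rw [← e.repr.norm_map v, lp_norm_sq]
  simp [e.repr_apply_apply]

section MatrixOp
variable (e : HilbertBasis ℤ ℂ H) (f : ℤ → ℤ → ℂ)

def SqSum (f : ℤ → ℤ → ℂ) : Prop := Summable fun p : ℤ × ℤ => ‖f p.1 p.2‖ ^ 2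

lemma row_summable (hf : SqSum f) (m : ℤ) : Summable fun n => ‖f m n‖ ^ 2 :=
  hf.comp_injective (i := fun n => (m, n)) (fun a b h => by simpa using h)

lemma col_summable (hf : SqSum f) (n : ℤ) : Summable fun m => ‖f m n‖ ^ 2 :=
  hf.comp_injective (i := fun m => (m, n)) (fun a b h => by simpa using h)

/-- the conjugated `m`-th row, as an element of ℓ². -/
def starRow (hf : SqSum f) (m : ℤ) : ℓ² :=
  ⟨fun n => starRingEnd ℂ (f m n), memℓp_two_of_sq (by simpa using row_summable f hf m)⟩

@[simp] lemma starRow_apply (hf : SqSum f) (m n : ℤ) :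
    (starRow f hf m : ℤ → ℂ) n = starRingEnd ℂ (f m n) := rfl

lemma starRow_norm_sq (hf : SqSum f) (m : ℤ) :
    ‖starRow f hf m‖ ^ 2 = ∑' n, ‖f m n‖ ^ 2 := by
  rw [lp_norm_sq]; simp

lemma rowsums_summable (hf : SqSum f) : Summable fun m => ∑' n, ‖f m n‖ ^ 2 :=
  ((summable_prod_of_nonneg (fun _ => sq_nonneg _)).mp hf).2

lemma Fc_mem (hf : SqSum f) (c : ℓ²) :
    Memℓp (fun m => (inner ℂ (starRow f hf m) c : ℂ)) 2 := by
  apply memℓp_two_of_sq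
  have hb : ∀ m, ‖(inner ℂ (starRow f hf m) c : ℂ)‖ ^ 2 ≤ (∑' n, ‖f m n‖ ^ 2) * ‖c‖ ^ 2 := by
    intro m
    calc ‖(inner ℂ (starRow f hf m) c : ℂ)‖ ^ 2 ≤ (‖starRow f hf m‖ * ‖c‖) ^ 2 := by
          apply pow_le_pow_left₀ (norm_nonneg _) (norm_inner_le_norm _ _)
      _ = (∑' n, ‖f m n‖ ^ 2) * ‖c‖ ^ 2 := by
          rw [mul_pow, starRow_norm_sq]
  exact Summable.of_nonneg_of_le (fun m => sq_nonneg _) hb ((rowsums_summable f hf).mul_right _)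

/-- matrix action on ℓ², as a linear map. -/
def matrixLM (hf : SqSum f) : ℓ² →ₗ[ℂ] ℓ² where
  toFun c := ⟨fun m => (inner ℂ (starRow f hf m) c : ℂ), Fc_mem f hf c⟩
  map_add' c d := by apply lp.ext; funext m; simp [inner_add_right]; rfl
  map_smul' a c := by apply lp.ext; funext m; simp [inner_smul_right]

@[simp] lemma matrixLM_apply (hf : SqSum f) (c : ℓ²) (m : ℤ) :
    (matrixLM f hf c : ℤ → ℂ) m = (inner ℂ (starRow f hf m) c : ℂ) := rfl

lemma matrixLM_bound (hf : SqSum f) (c : ℓ²) :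
    ‖matrixLM f hf c‖ ≤ Real.sqrt (∑' p : ℤ × ℤ, ‖f p.1 p.2‖ ^ 2) * ‖c‖ := by
  have h2 : ‖matrixLM f hf c‖ ^ 2 ≤ (∑' p : ℤ × ℤ, ‖f p.1 p.2‖ ^ 2) * ‖c‖ ^ 2 := by
    rw [lp_norm_sq]
    have htot : ∑' p : ℤ × ℤ, ‖f p.1 p.2‖ ^ 2 = ∑' m, ∑' n, ‖f m n‖ ^ 2 := Summable.tsum_prod hf
    rw [htot, ← tsum_mul_right]
    apply Summable.tsum_le_tsum
    · intro m
      simp only [matrixLM_apply]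
      calc ‖(inner ℂ (starRow f hf m) c : ℂ)‖ ^ 2 ≤ (‖starRow f hf m‖ * ‖c‖) ^ 2 := by
            apply pow_le_pow_left₀ (norm_nonneg _) (norm_inner_le_norm _ _)
        _ = (∑' n, ‖f m n‖ ^ 2) * ‖c‖ ^ 2 := by rw [mul_pow, starRow_norm_sq]
    · exact lp_summable_sq _
    · exact (rowsums_summable f hf).mul_right _
  have h3 : ‖matrixLM f hf c‖ ≤ Real.sqrt ((∑' p : ℤ × ℤ, ‖f p.1 p.2‖ ^ 2) * ‖c‖ ^ 2) := by
    rw [← Real.sqrt_sq (norm_nonneg (matrixLM f hf c))]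
    exact Real.sqrt_le_sqrt h2
  rwa [Real.sqrt_mul (tsum_nonneg (fun p : ℤ × ℤ => sq_nonneg ‖f p.1 p.2‖)),
    Real.sqrt_sq (norm_nonneg c)] at h3

/-- The bounded operator on `H` with matrix `f` in the basis `e`. -/
def matrixOp (hf : SqSum f) : H →L[ℂ] H :=
  (e.repr.symm.toLinearIsometry.toContinuousLinearMap).comp
    (((matrixLM f hf).mkContinuous _ (matrixLM_bound f hf)).comp
      e.repr.toLinearIsometry.toContinuousLinearMap)

lemma matrixOp_entry (hf : SqSum f) (m n : ℤ) :
    (inner ℂ (e m) (matrixOp e f hf (e n)) : ℂ) = f m n := by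
  rw [← e.repr_apply_apply]
  show (e.repr (e.repr.symm (matrixLM f hf (e.repr (e n))))) m = f m n
  rw [e.repr.apply_symm_apply, e.repr_self]
  rw [matrixLM_apply, lp.inner_single_right]
  simp

lemma matrixOp_col_norm (hf : SqSum f) (n : ℤ) :
    ‖matrixOp e f hf (e n)‖ ^ 2 = ∑' m, ‖f m n‖ ^ 2 := by
  rw [hb_norm_sq e]
  congr 1; ext m; rw [matrixOp_entry]

lemma colsums_summable (hf : SqSum f) : Summable fun n => ∑' m, ‖f m n‖ ^ 2 := by
  have hf' : Summable fun p : ℤ × ℤ => ‖f p.2 p.1‖ ^ 2 := hf.prod_symm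
  exact ((summable_prod_of_nonneg (fun _ => sq_nonneg _)).mp hf').2

lemma colsums_tsum (hf : SqSum f) :
    ∑' n, ∑' m, ‖f m n‖ ^ 2 = ∑' p : ℤ × ℤ, ‖f p.1 p.2‖ ^ 2 := by
  have hf' : Summable fun p : ℤ × ℤ => ‖f p.2 p.1‖ ^ 2 := hf.prod_symm
  rw [← Summable.tsum_prod hf']
  exact (Equiv.prodComm ℤ ℤ).tsum_eq (fun p : ℤ × ℤ => ‖f p.1 p.2‖ ^ 2)

end MatrixOp

variable (e : HilbertBasis ℤ ℂ H)

lemma ext_entries {A B : H →L[ℂ] H}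
    (h : ∀ m n : ℤ, (inner ℂ (e m) (A (e n)) : ℂ) = (inner ℂ (e m) (B (e n)) : ℂ)) : A = B := by
  have hv : ∀ n, A (e n) = B (e n) := by
    intro n
    apply e.repr.injective
    apply lp.ext
    funext m
    rw [e.repr_apply_apply, e.repr_apply_apply]
    exact h m n
  apply ContinuousLinearMap.ext_on (Submodule.dense_iff_topologicalClosure_eq_top.mpr e.dense_span)
  rintro v ⟨n, rfl⟩
  exact hv n

/-- The matrix entries of `x`. -/
def ent (x : H →L[ℂ] H) : ℤ → ℤ → ℂ := fun m n => inner ℂ (e m) (x (e n))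

lemma ent_star (x : H →L[ℂ] H) (m n : ℤ) :
    ent e (star x) m n = starRingEnd ℂ (ent e x n m) := by
  unfold ent
  rw [ContinuousLinearMap.star_eq_adjoint, ContinuousLinearMap.adjoint_inner_right,
    ← inner_conj_symm]

lemma col_norm_sq (x : H →L[ℂ] H) (n : ℤ) :
    ‖x (e n)‖ ^ 2 = ∑' m, ‖ent e x m n‖ ^ 2 := hb_norm_sq e _

lemma ent_sqsum {x : H →L[ℂ] H} (hx : IsHS e x) : SqSum (ent e x) := by
  have h1 : Summable fun p : ℤ × ℤ => ‖ent e x p.2 p.1‖ ^ 2 := by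
    apply (summable_prod_of_nonneg (fun _ => sq_nonneg _)).mpr
    constructor
    · intro n
      have := lp_summable_sq (e.repr (x (e n)))
      simpa [e.repr_apply_apply, ent] using this
    · apply hx.congr
      intro n
      exact col_norm_sq e x n
  have := h1.prod_symm
  simpa [SqSum] using this

lemma ent_tsum {x : H →L[ℂ] H} (hx : IsHS e x) :
    ∑' p : ℤ × ℤ, ‖ent e x p.1 p.2‖ ^ 2 = ∑' n, ‖x (e n)‖ ^ 2 := by
  rw [← colsums_tsum _ (ent_sqsum e hx)]
  congr 1; ext n; exact (col_norm_sq e x n).symm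


lemma le_of_sq {a b : ℝ} (ha : 0 ≤ a) (hb : 0 ≤ b) (h : a ^ 2 ≤ b ^ 2) : a ≤ b := by
  nlinarith

lemma hsNorm_nonneg (A : H →L[ℂ] H) : 0 ≤ hsNorm e A := Real.sqrt_nonneg _

lemma hsNorm_sq (A : H →L[ℂ] H) : hsNorm e A ^ 2 = ∑' n, ‖A (e n)‖ ^ 2 :=
  Real.sq_sqrt (tsum_nonneg fun n => sq_nonneg _)

lemma IsHS.add {x y : H →L[ℂ] H} (hx : IsHS e x) (hy : IsHS e y) : IsHS e (x + y) := by
  unfold IsHS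
  apply Summable.of_nonneg_of_le (fun n => sq_nonneg _) _ ((hx.mul_left 2).add (hy.mul_left 2))
  intro n
  have h1 : ‖(x + y) (e n)‖ ≤ ‖x (e n)‖ + ‖y (e n)‖ := norm_add_le _ _
  nlinarith [h1, sq_nonneg (‖x (e n)‖ - ‖y (e n)‖), norm_nonneg ((x + y) (e n)), norm_nonneg (x (e n)), norm_nonneg (y (e n))]

lemma IsHS.neg {x : H →L[ℂ] H} (hx : IsHS e x) : IsHS e (-x) := by
  apply hx.congr; intro n; simp

lemma IsHS.sub {x y : H →L[ℂ] H} (hx : IsHS e x) (hy : IsHS e y) : IsHS e (x - y) := by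
  have := IsHS.add e hx (IsHS.neg e hy)
  simpa [sub_eq_add_neg] using this

lemma IsHS.rsmul {x : H →L[ℂ] H} (r : ℝ) (hx : IsHS e x) : IsHS e (r • x) := by
  apply (hx.mul_left (|r| ^ 2)).congr
  intro n
  simp [ContinuousLinearMap.smul_apply, norm_smul, mul_pow, Real.norm_eq_abs]

lemma ent_add (x y : H →L[ℂ] H) (m n : ℤ) :
    ent e (x + y) m n = ent e x m n + ent e y m n := by
  unfold ent; simp [inner_add_right]

lemma ent_sub (x y : H →L[ℂ] H) (m n : ℤ) :
    ent e (x - y) m n = ent e x m n - ent e y m n := by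
  unfold ent; simp [inner_sub_right]

lemma ent_rsmul (r : ℝ) (x : H →L[ℂ] H) (m n : ℤ) :
    ent e (r • x) m n = (r : ℂ) * ent e x m n := by
  unfold ent
  rw [ContinuousLinearMap.smul_apply, RCLike.real_smul_eq_coe_smul (K := ℂ), inner_smul_right]
  rfl


/-- The matrix of the `b₂⁺` part. -/
def gmat (x : H →L[ℂ] H) : ℤ → ℤ → ℂ := fun m n =>
  if m < n then 0
  else if m = n then ((ent e x n n).re : ℂ)
  else ent e x m n + starRingEnd ℂ (ent e x n m)

lemma gmat_bound (x : H →L[ℂ] H) (m n : ℤ) :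
    ‖gmat e x m n‖ ≤ ‖ent e x m n‖ + ‖ent e x n m‖ := by
  unfold gmat
  split_ifs with h1 h2
  · simp; positivity
  · subst h2
    have : ‖(((ent e x m m).re : ℝ) : ℂ)‖ ≤ ‖ent e x m m‖ := by
      rw [Complex.norm_real]
      exact (Complex.abs_re_le_norm _).trans_eq rfl
    calc ‖(((ent e x m m).re : ℝ) : ℂ)‖ ≤ ‖ent e x m m‖ := this
      _ ≤ ‖ent e x m m‖ + ‖ent e x m m‖ := le_add_of_nonneg_right (norm_nonneg _)
  · calc ‖ent e x m n + starRingEnd ℂ (ent e x n m)‖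
        ≤ ‖ent e x m n‖ + ‖starRingEnd ℂ (ent e x n m)‖ := norm_add_le _ _
      _ = ‖ent e x m n‖ + ‖ent e x n m‖ := by rw [RCLike.norm_conj]

lemma ent_sqsum_symm {x : H →L[ℂ] H} (hx : IsHS e x) :
    Summable fun p : ℤ × ℤ => ‖ent e x p.2 p.1‖ ^ 2 := by
  have := (ent_sqsum e hx).prod_symm
  simpa [Prod.swap] using this

lemma gmat_sqsum {x : H →L[ℂ] H} (hx : IsHS e x) : SqSum (gmat e x) := by
  have h2 : Summable fun p : ℤ × ℤ =>
      2 * ‖ent e x p.1 p.2‖ ^ 2 + 2 * ‖ent e x p.2 p.1‖ ^ 2 :=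
    ((ent_sqsum e hx).mul_left 2).add ((ent_sqsum_symm e hx).mul_left 2)
  apply Summable.of_nonneg_of_le (fun p => sq_nonneg _) _ h2
  intro p
  have hb := gmat_bound e x p.1 p.2
  nlinarith [hb, sq_nonneg (‖ent e x p.1 p.2‖ - ‖ent e x p.2 p.1‖),
    norm_nonneg (gmat e x p.1 p.2), norm_nonneg (ent e x p.1 p.2), norm_nonneg (ent e x p.2 p.1)]

lemma gmat_tsum_le {x : H →L[ℂ] H} (hx : IsHS e x) :
    ∑' p : ℤ × ℤ, ‖gmat e x p.1 p.2‖ ^ 2 ≤ 4 * ∑' p : ℤ × ℤ, ‖ent e x p.1 p.2‖ ^ 2 := by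
  have h2 : Summable fun p : ℤ × ℤ =>
      2 * ‖ent e x p.1 p.2‖ ^ 2 + 2 * ‖ent e x p.2 p.1‖ ^ 2 :=
    ((ent_sqsum e hx).mul_left 2).add ((ent_sqsum_symm e hx).mul_left 2)
  have hle : ∑' p : ℤ × ℤ, ‖gmat e x p.1 p.2‖ ^ 2 ≤
      ∑' p : ℤ × ℤ, (2 * ‖ent e x p.1 p.2‖ ^ 2 + 2 * ‖ent e x p.2 p.1‖ ^ 2) := by
    apply Summable.tsum_le_tsum _ (gmat_sqsum e hx) h2
    intro p
    have hb := gmat_bound e x p.1 p.2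
    nlinarith [hb, sq_nonneg (‖ent e x p.1 p.2‖ - ‖ent e x p.2 p.1‖),
      norm_nonneg (gmat e x p.1 p.2), norm_nonneg (ent e x p.1 p.2), norm_nonneg (ent e x p.2 p.1)]
  have hsw : ∑' p : ℤ × ℤ, ‖ent e x p.2 p.1‖ ^ 2 = ∑' p : ℤ × ℤ, ‖ent e x p.1 p.2‖ ^ 2 :=
    (Equiv.prodComm ℤ ℤ).tsum_eq (fun p : ℤ × ℤ => ‖ent e x p.1 p.2‖ ^ 2)
  rw [Summable.tsum_add (((ent_sqsum e hx).mul_left 2)) ((ent_sqsum_symm e hx).mul_left 2),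
    tsum_mul_left, tsum_mul_left, hsw] at hle
  linarith

/-- The `b₂⁺` part of `x`. -/
def bOp {x : H →L[ℂ] H} (hx : IsHS e x) : H →L[ℂ] H :=
  matrixOp e (gmat e x) (gmat_sqsum e hx)

lemma bOp_ent {x : H →L[ℂ] H} (hx : IsHS e x) (m n : ℤ) :
    ent e (bOp e hx) m n = gmat e x m n :=
  matrixOp_entry e (gmat e x) (gmat_sqsum e hx) m n

lemma matrixOp_isHS (f : ℤ → ℤ → ℂ) (hf : SqSum f) : IsHS e (matrixOp e f hf) := by
  unfold IsHS
  apply (colsums_summable f hf).congr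
  intro n
  exact (matrixOp_col_norm e f hf n).symm

lemma bOp_isHS {x : H →L[ℂ] H} (hx : IsHS e x) : IsHS e (bOp e hx) :=
  matrixOp_isHS e _ _

lemma bOp_upperTri {x : H →L[ℂ] H} (hx : IsHS e x) : UpperTri e (bOp e hx) := by
  intro m n h
  have := bOp_ent e hx m n
  unfold ent at this
  rw [this]
  unfold gmat
  rw [if_pos h]

lemma bOp_realDiag {x : H →L[ℂ] H} (hx : IsHS e x) : RealDiag e (bOp e hx) := by
  intro n
  have := bOp_ent e hx n n
  unfold ent at this
  rw [this]
  unfold gmat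
  rw [if_neg (lt_irrefl n), if_pos rfl, Complex.ofReal_im]

lemma bOp_skew {x : H →L[ℂ] H} (hx : IsHS e x) : SkewHerm (x - bOp e hx) := by
  have key : star x + x = star (bOp e hx) + bOp e hx := by
    apply ext_entries e
    intro m n
    show ent e (star x + x) m n = ent e (star (bOp e hx) + bOp e hx) m n
    rw [ent_add, ent_add, ent_star, ent_star, bOp_ent, bOp_ent]
    show starRingEnd ℂ (ent e x n m) + ent e x m n
      = starRingEnd ℂ (gmat e x n m) + gmat e x m n
    unfold gmat
    rcases lt_trichotomy m n with h | h | h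
    · rw [if_pos h, if_neg (not_lt.mpr h.le), if_neg (ne_of_gt h)]
      simp only [map_add, RingHomCompTriple.comp_apply, RingHom.id_apply,
        Complex.conj_conj, add_zero]
      try ring
    · subst h
      rw [if_neg (lt_irrefl m), if_pos rfl]
      rw [Complex.conj_ofReal]
      rw [add_comm (starRingEnd ℂ (ent e x m m)) (ent e x m m), Complex.add_conj]
      push_cast
      try ring
    · rw [if_pos h, if_neg (not_lt.mpr h.le), if_neg (ne_of_gt h)]
      simp only [map_zero, zero_add, map_add, Complex.conj_conj]
      ring
  unfold SkewHerm
  rw [star_sub]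
  have h2 : star x = star (bOp e hx) + bOp e hx - x := by rw [← key]; abel
  rw [h2]; abel

lemma decomp_uniq {u b u' b' : H →L[ℂ] H} (hu : InU2 e u) (hb : InB2 e b)
    (hu' : InU2 e u') (hb' : InB2 e b') (h : u + b = u' + b') : u = u' ∧ b = b' := by
  have hd : b - b' = u' - u := by
    rw [sub_eq_sub_iff_add_eq_add, add_comm]
    exact h
  have hskew : star (b - b') = -(b - b') := by
    rw [hd, star_sub, hu.2, hu'.2]
    abel
  have htri : ∀ m n : ℤ, m < n → ent e (b - b') m n = 0 := by
    intro m n hmn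
    rw [ent_sub]
    show (inner ℂ (e m) (b (e n)) : ℂ) - (inner ℂ (e m) (b' (e n)) : ℂ) = 0
    rw [hb.2.1 m n hmn, hb'.2.1 m n hmn, sub_zero]
  have hdiag : ∀ n : ℤ, (ent e (b - b') n n).im = 0 := by
    intro n
    rw [ent_sub]
    show ((inner ℂ (e n) (b (e n)) : ℂ) - (inner ℂ (e n) (b' (e n)) : ℂ)).im = 0
    rw [Complex.sub_im, hb.2.2 n, hb'.2.2 n, sub_zero]
  have hzero : b - b' = 0 := by
    apply ext_entries e
    intro m n
    show ent e (b - b') m n = ent e (0 : H →L[ℂ] H) m n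
    have h0 : ent e (0 : H →L[ℂ] H) m n = 0 := by
      unfold ent; simp
    rw [h0]
    have hsk : starRingEnd ℂ (ent e (b - b') n m) = - ent e (b - b') m n := by
      have h1 := congrArg (fun A => ent e A m n) hskew
      rw [ent_star] at h1
      rw [h1]
      unfold ent
      simp [inner_sub_right, inner_neg_right]
      try ring
    rcases lt_trichotomy m n with h' | h' | h'
    · exact htri m n h'
    · subst h'
      have him := hdiag m
      have hre : (ent e (b - b') m m).re = 0 := by
        have h2 := congrArg Complex.re hsk
        simp only [Complex.conj_re, Complex.neg_re] at h2
        linarith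
      exact Complex.ext hre him
    · rw [← neg_neg (ent e (b - b') m n), ← hsk, htri n m h', map_zero, neg_zero]
  constructor
  · have h3 : u' - u = 0 := by rw [← hd, hzero]
    exact (sub_eq_zero.mp h3).symm
  · exact sub_eq_zero.mp hzero


lemma bOp_hsNorm_sq {x : H →L[ℂ] H} (hx : IsHS e x) :
    hsNorm e (bOp e hx) ^ 2 ≤ 4 * hsNorm e x ^ 2 := by
  rw [hsNorm_sq, hsNorm_sq]
  have h1 : ∑' n, ‖bOp e hx (e n)‖ ^ 2 = ∑' p : ℤ × ℤ, ‖gmat e x p.1 p.2‖ ^ 2 := by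
    rw [← colsums_tsum _ (gmat_sqsum e hx)]
    congr 1
    funext n
    exact matrixOp_col_norm e _ _ n
  rw [h1, ← ent_tsum e hx]
  exact gmat_tsum_le e hx

lemma bOp_hsNorm {x : H →L[ℂ] H} (hx : IsHS e x) :
    hsNorm e (bOp e hx) ≤ 2 * hsNorm e x := by
  apply le_of_sq (hsNorm_nonneg e _) (mul_nonneg (by norm_num) (hsNorm_nonneg e _))
  calc hsNorm e (bOp e hx) ^ 2 ≤ 4 * hsNorm e x ^ 2 := bOp_hsNorm_sq e hx
    _ = (2 * hsNorm e x) ^ 2 := by ring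

lemma sub_hsNorm_sq {x y : H →L[ℂ] H} (hx : IsHS e x) (hy : IsHS e y) :
    hsNorm e (x - y) ^ 2 ≤ 2 * hsNorm e x ^ 2 + 2 * hsNorm e y ^ 2 := by
  rw [hsNorm_sq, hsNorm_sq, hsNorm_sq]
  have hsum : Summable fun n : ℤ => 2 * ‖x (e n)‖ ^ 2 + 2 * ‖y (e n)‖ ^ 2 :=
    (hx.mul_left 2).add (hy.mul_left 2)
  have hb : ∀ n : ℤ, ‖(x - y) (e n)‖ ^ 2 ≤ 2 * ‖x (e n)‖ ^ 2 + 2 * ‖y (e n)‖ ^ 2 := by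
    intro n
    have h1 : ‖(x - y) (e n)‖ ≤ ‖x (e n)‖ + ‖y (e n)‖ := by
      rw [ContinuousLinearMap.sub_apply]
      exact (norm_sub_le _ _)
    nlinarith [h1, sq_nonneg (‖x (e n)‖ - ‖y (e n)‖), norm_nonneg ((x - y) (e n)),
      norm_nonneg (x (e n)), norm_nonneg (y (e n))]
  have := Summable.tsum_le_tsum hb (IsHS.sub e hx hy) hsum
  rw [Summable.tsum_add (hx.mul_left 2) (hy.mul_left 2), tsum_mul_left, tsum_mul_left] at this
  exact this

lemma uOp_hsNorm {x : H →L[ℂ] H} (hx : IsHS e x) :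
    hsNorm e (x - bOp e hx) ≤ 4 * hsNorm e x := by
  apply le_of_sq (hsNorm_nonneg e _) (mul_nonneg (by norm_num) (hsNorm_nonneg e _))
  calc hsNorm e (x - bOp e hx) ^ 2
      ≤ 2 * hsNorm e x ^ 2 + 2 * hsNorm e (bOp e hx) ^ 2 :=
        sub_hsNorm_sq e hx (bOp_isHS e hx)
    _ ≤ 2 * hsNorm e x ^ 2 + 2 * (4 * hsNorm e x ^ 2) := by
        linarith [bOp_hsNorm_sq e hx]
    _ ≤ (4 * hsNorm e x) ^ 2 := by nlinarith [sq_nonneg (hsNorm e x)]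

lemma uPart_InU2 {x : H →L[ℂ] H} (hx : IsHS e x) : InU2 e (x - bOp e hx) :=
  ⟨IsHS.sub e hx (bOp_isHS e hx), bOp_skew e hx⟩

lemma bPart_InB2 {x : H →L[ℂ] H} (hx : IsHS e x) : InB2 e (bOp e hx) :=
  ⟨bOp_isHS e hx, bOp_upperTri e hx, bOp_realDiag e hx⟩

lemma InU2.add {u v : H →L[ℂ] H} (hu : InU2 e u) (hv : InU2 e v) : InU2 e (u + v) := by
  refine ⟨IsHS.add e hu.1 hv.1, ?_⟩
  unfold SkewHerm
  rw [star_add, hu.2, hv.2]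
  abel

lemma star_rsmul (e' : HilbertBasis ℤ ℂ H) (r : ℝ) (u : H →L[ℂ] H) :
    star (r • u) = r • star u := by
  apply ext_entries e'
  intro m n
  show ent e' (star (r • u)) m n = ent e' (r • star u) m n
  rw [ent_star, ent_rsmul, ent_rsmul, ent_star, map_mul, Complex.conj_ofReal]

lemma InU2.rsmul (r : ℝ) {u : H →L[ℂ] H} (hu : InU2 e u) : InU2 e (r • u) := by
  refine ⟨IsHS.rsmul e r hu.1, ?_⟩
  unfold SkewHerm
  rw [star_rsmul e, hu.2, smul_neg]

lemma InB2.add {u v : H →L[ℂ] H} (hu : InB2 e u) (hv : InB2 e v) : InB2 e (u + v) := by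
  refine ⟨IsHS.add e hu.1 hv.1, ?_, ?_⟩
  · intro m n h
    rw [ContinuousLinearMap.add_apply, inner_add_right, hu.2.1 m n h, hv.2.1 m n h, add_zero]
  · intro n
    rw [ContinuousLinearMap.add_apply, inner_add_right, Complex.add_im, hu.2.2 n, hv.2.2 n,
      add_zero]

lemma InB2.rsmul (r : ℝ) {u : H →L[ℂ] H} (hu : InB2 e u) : InB2 e (r • u) := by
  refine ⟨IsHS.rsmul e r hu.1, ?_, ?_⟩
  · intro m n h
    have h1 : ent e (r • u) m n = (r : ℂ) * ent e u m n := ent_rsmul e r u m n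
    show ent e (r • u) m n = 0
    rw [h1]
    have h2 : ent e u m n = 0 := hu.2.1 m n h
    rw [h2, mul_zero]
  · intro n
    have h1 : ent e (r • u) n n = (r : ℂ) * ent e u n n := ent_rsmul e r u n n
    show (ent e (r • u) n n).im = 0
    rw [h1]
    have h2 : (ent e u n n).im = 0 := hu.2.2 n
    rw [Complex.mul_im, Complex.ofReal_im, Complex.ofReal_re, h2, mul_zero, zero_mul, add_zero]

theorem statement_8' :
    (∀ x : H →L[ℂ] H, IsHS e x →
      ∃! ub : (H →L[ℂ] H) × (H →L[ℂ] H),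
        InU2 e ub.1 ∧ InB2 e ub.2 ∧ x = ub.1 + ub.2) ∧
    ∃ pu pb : (H →L[ℂ] H) → (H →L[ℂ] H),
      (∀ x : H →L[ℂ] H, IsHS e x → InU2 e (pu x) ∧ InB2 e (pb x) ∧ x = pu x + pb x) ∧
      (∀ x y : H →L[ℂ] H, IsHS e x → IsHS e y →
        pu (x + y) = pu x + pu y ∧ pb (x + y) = pb x + pb y) ∧
      (∀ (r : ℝ) (x : H →L[ℂ] H), IsHS e x →
        pu (r • x) = r • pu x ∧ pb (r • x) = r • pb x) ∧
      ∃ c : ℝ, ∀ x : H →L[ℂ] H, IsHS e x →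
        hsNorm e (pu x) ≤ c * hsNorm e x ∧ hsNorm e (pb x) ≤ c * hsNorm e x := by
  classical
  constructor
  · intro x hx
    refine ⟨(x - bOp e hx, bOp e hx),
      ⟨uPart_InU2 e hx, bPart_InB2 e hx, (sub_add_cancel x (bOp e hx)).symm⟩, ?_⟩
    rintro ⟨u', b'⟩ ⟨hu', hb', hx'⟩
    have key := decomp_uniq e hu' hb' (uPart_InU2 e hx) (bPart_InB2 e hx)
      (by rw [sub_add_cancel]; exact hx'.symm)
    exact Prod.ext key.1 key.2
  · refine ⟨fun x => if hx : IsHS e x then x - bOp e hx else 0,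
      fun x => if hx : IsHS e x then bOp e hx else 0, ?_, ?_, ?_, ⟨4, ?_⟩⟩
    · intro x hx
      simp only [dif_pos hx]
      exact ⟨uPart_InU2 e hx, bPart_InB2 e hx, (sub_add_cancel x (bOp e hx)).symm⟩
    · intro x y hx hy
      have hxy := IsHS.add e hx hy
      have key := decomp_uniq e
        (InU2.add e (uPart_InU2 e hx) (uPart_InU2 e hy))
        (InB2.add e (bPart_InB2 e hx) (bPart_InB2 e hy))
        (uPart_InU2 e hxy) (bPart_InB2 e hxy) (by rw [sub_add_cancel]; abel)
      constructor
      · simp only [dif_pos hx, dif_pos hy, dif_pos hxy]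
        exact key.1.symm
      · simp only [dif_pos hx, dif_pos hy, dif_pos hxy]
        exact key.2.symm
    · intro r x hx
      have hrx := IsHS.rsmul e r hx
      have key := decomp_uniq e
        (InU2.rsmul e r (uPart_InU2 e hx))
        (InB2.rsmul e r (bPart_InB2 e hx))
        (uPart_InU2 e hrx) (bPart_InB2 e hrx)
        (by rw [sub_add_cancel, ← smul_add, sub_add_cancel])
      constructor
      · simp only [dif_pos hx, dif_pos hrx]
        exact key.1.symm
      · simp only [dif_pos hx, dif_pos hrx]
        exact key.2.symm
    · intro x hx
      simp only [dif_pos hx]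
      refine ⟨uOp_hsNorm e hx, ?_⟩
      have := bOp_hsNorm e hx
      have h0 := hsNorm_nonneg e x
      linarith


/-- `L₂(H) = u₂(H) ⊕ b₂⁺(H)`: every Hilbert–Schmidt operator `x` is
uniquely `x = u + b` with `u` skew-hermitian Hilbert–Schmidt and `b ∈ b₂⁺(H)`, and the
corresponding projections `p_{u₂}`, `p_{b₂⁺}` are (real-)linear and bounded for the
Hilbert–Schmidt norm. -/
theorem statement_8 {H : Type*} [NormedAddCommGroup H] [InnerProductSpace ℂ H]
    [CompleteSpace H] (e : HilbertBasis ℤ ℂ H) :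
    (∀ x : H →L[ℂ] H, IsHS e x →
      ∃! ub : (H →L[ℂ] H) × (H →L[ℂ] H),
        InU2 e ub.1 ∧ InB2 e ub.2 ∧ x = ub.1 + ub.2) ∧
    ∃ pu pb : (H →L[ℂ] H) → (H →L[ℂ] H),
      (∀ x : H →L[ℂ] H, IsHS e x → InU2 e (pu x) ∧ InB2 e (pb x) ∧ x = pu x + pb x) ∧
      (∀ x y : H →L[ℂ] H, IsHS e x → IsHS e y →
        pu (x + y) = pu x + pu y ∧ pb (x + y) = pb x + pb y) ∧
      (∀ (r : ℝ) (x : H →L[ℂ] H), IsHS e x →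
        pu (r • x) = r • pu x ∧ pb (r • x) = r • pb x) ∧
      ∃ c : ℝ, ∀ x : H →L[ℂ] H, IsHS e x →
        hsNorm e (pu x) ≤ c * hsNorm e x ∧ hsNorm e (pb x) ≤ c * hsNorm e x := by
  exact statement_8' e

end PL
end
end

section
/- b₂⁺(H) is an isotropic subalgebra for the imaginary part of the trace: for all b, b′ ∈ b₂⁺(H), the commutator [b, b′] = bb′ − b′b belongs to b₂⁺(H) (in particular it is trace class with real diagonal and upper triangular), and Im Tr(b b′) = 0. -/
/- Setting: `H` is a separable complex Hilbert space with a fixed orthonormal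
(Hilbert) basis `e` indexed by `ℤ`. -/

set_option synthInstance.maxHeartbeats 1000000
set_option maxHeartbeats 2000000

noncomputable section
open ContinuousLinearMap

namespace PL

variable {H : Type*} [NormedAddCommGroup H] [InnerProductSpace ℂ H] [CompleteSpace H]

/-- Matrix entry of a product. -/
lemma entry_mul (e : HilbertBasis ℤ ℂ H) (B C : H →L[ℂ] H) (m n : ℤ) :
    (inner ℂ (e m) ((B * C) (e n)) : ℂ)
      = ∑' k : ℤ, (inner ℂ (e m) (B (e k)) : ℂ) * inner ℂ (e k) (C (e n)) := by
  calc (inner ℂ (e m) ((B * C) (e n)) : ℂ)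
      = inner ℂ ((ContinuousLinearMap.adjoint B) (e m)) (C (e n)) := by
        rw [ContinuousLinearMap.mul_apply, ContinuousLinearMap.adjoint_inner_left]
    _ = ∑' k : ℤ, (inner ℂ ((ContinuousLinearMap.adjoint B) (e m)) (e k) : ℂ)
          * inner ℂ (e k) (C (e n)) := (e.tsum_inner_mul_inner _ _).symm
    _ = _ := tsum_congr fun k => by rw [ContinuousLinearMap.adjoint_inner_left]

lemma upperTri_mul (e : HilbertBasis ℤ ℂ H) {B C : H →L[ℂ] H}
    (hB : UpperTri e B) (hC : UpperTri e C) : UpperTri e (B * C) := by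
  intro m n hmn
  rw [entry_mul]
  have h : ∀ k : ℤ, (inner ℂ (e m) (B (e k)) : ℂ) * inner ℂ (e k) (C (e n)) = 0 := by
    intro k
    rcases le_or_gt k m with h | h
    · rw [hC k n (lt_of_le_of_lt h hmn), mul_zero]
    · rw [hB m k h, zero_mul]
  simp [h]

lemma diag_mul (e : HilbertBasis ℤ ℂ H) {B C : H →L[ℂ] H}
    (hB : UpperTri e B) (hC : UpperTri e C) (n : ℤ) :
    (inner ℂ (e n) ((B * C) (e n)) : ℂ) = inner ℂ (e n) (B (e n)) * inner ℂ (e n) (C (e n)) := by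
  rw [entry_mul]
  refine tsum_eq_single n (fun k hk => ?_)
  rcases hk.lt_or_gt with h | h
  · rw [hC k n h, mul_zero]
  · rw [hB n k h, zero_mul]

/-- Parseval. -/
lemma hasSum_norm_sq (e : HilbertBasis ℤ ℂ H) (x : H) :
    HasSum (fun n : ℤ => ‖(inner ℂ (e n) x : ℂ)‖ ^ 2) (‖x‖ ^ 2) := by
  have h := e.hasSum_inner_mul_inner x x
  have h2 : ∀ n : ℤ, (inner ℂ x (e n) : ℂ) * inner ℂ (e n) x
      = ((‖(inner ℂ (e n) x : ℂ)‖ ^ 2 : ℝ) : ℂ) := by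
    intro n
    rw [← inner_conj_symm x (e n), RCLike.conj_mul]
    norm_cast
  rw [funext h2, inner_self_eq_norm_sq_to_K] at h
  refine Complex.hasSum_ofReal.mp ?_
  convert h using 1
  norm_cast
  exact RCLike.ofReal_pow (K := ℂ) ‖x‖ 2

lemma tsum_norm_sq (e : HilbertBasis ℤ ℂ H) (x : H) :
    ∑' n : ℤ, ‖(inner ℂ (e n) x : ℂ)‖ ^ 2 = ‖x‖ ^ 2 := (hasSum_norm_sq e x).tsum_eq

/-- If `B` is Hilbert–Schmidt and `U` is bounded then `n ↦ ‖B† (U eₙ)‖²` is summable. -/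
lemma summable_adj_comp (e : HilbertBasis ℤ ℂ H) {B : H →L[ℂ] H}
    (hB : Summable (fun n : ℤ => ‖B (e n)‖ ^ 2)) (U : H →L[ℂ] H) :
    Summable fun n : ℤ => ‖(ContinuousLinearMap.adjoint B) (U (e n))‖ ^ 2 := by
  set F : ℤ × ℤ → ℝ :=
    fun p => ‖(inner ℂ ((ContinuousLinearMap.adjoint U) (B (e p.1))) (e p.2) : ℂ)‖ ^ 2 with hF
  have hF0 : 0 ≤ F := fun p => by positivity
  have hslice : ∀ n : ℤ, HasSum (fun m : ℤ => F (n, m))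
      (‖(ContinuousLinearMap.adjoint U) (B (e n))‖ ^ 2) := by
    intro n
    have := hasSum_norm_sq e ((ContinuousLinearMap.adjoint U) (B (e n)))
    refine HasSum.congr_fun this fun m => ?_
    simp only [hF]
    rw [norm_inner_symm]
  have hFsum : Summable F := by
    rw [summable_prod_of_nonneg hF0]
    constructor
    · exact fun n => (hslice n).summable
    · refine Summable.of_nonneg_of_le (fun n => tsum_nonneg fun m => hF0 _) (fun n => ?_)
        (hB.mul_left (‖(ContinuousLinearMap.adjoint U)‖ ^ 2))
      rw [(hslice n).tsum_eq]
      calc ‖(ContinuousLinearMap.adjoint U) (B (e n))‖ ^ 2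
          ≤ (‖(ContinuousLinearMap.adjoint U)‖ * ‖B (e n)‖) ^ 2 := by
            have := (ContinuousLinearMap.adjoint U).le_opNorm (B (e n))
            have h0 : (0:ℝ) ≤ ‖(ContinuousLinearMap.adjoint U) (B (e n))‖ := norm_nonneg _
            nlinarith
        _ = ‖(ContinuousLinearMap.adjoint U)‖ ^ 2 * ‖B (e n)‖ ^ 2 := by ring
  have hswap : Summable fun q : ℤ × ℤ => F (q.2, q.1) := hFsum.prod_symm
  have hmarg := (summable_prod_of_nonneg (f := fun q : ℤ × ℤ => F (q.2, q.1))
    (fun q => hF0 (q.2, q.1))).mp hswap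
  refine hmarg.2.congr fun m => ?_
  have : ∀ n : ℤ, F (n, m) = ‖(inner ℂ (e n) ((ContinuousLinearMap.adjoint B) (U (e m))) : ℂ)‖ ^ 2 := by
    intro n
    simp only [hF]
    rw [ContinuousLinearMap.adjoint_inner_left, ContinuousLinearMap.adjoint_inner_right]
  rw [tsum_congr fun n => this n, tsum_norm_sq]

lemma summable_mul_of_sq {a c : ℤ → ℝ} (h0a : ∀ n, 0 ≤ a n) (h0c : ∀ n, 0 ≤ c n)
    (ha : Summable fun n => a n ^ 2) (hc : Summable fun n => c n ^ 2) :
    Summable fun n => a n * c n := by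
  refine Summable.of_nonneg_of_le (fun n => mul_nonneg (h0a n) (h0c n)) (fun n => ?_)
    ((ha.add hc).div_const 2)
  have := sq_nonneg (a n - c n)
  nlinarith

lemma absCLM_isPositive (A : H →L[ℂ] H) : (absCLM A).IsPositive :=
  (ContinuousLinearMap.nonneg_iff_isPositive _).mp (CFC.sqrt_nonneg _)

lemma absCLM_norm_apply (A : H →L[ℂ] H) (x : H) : ‖absCLM A x‖ = ‖A x‖ := by
  set P := absCLM A with hPdef
  have hP : P * P = star A * A := CFC.sqrt_mul_sqrt_self _ (star_mul_self_nonneg A)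
  have hsa : ContinuousLinearMap.adjoint P = P :=
    (absCLM_isPositive A).isSelfAdjoint.adjoint_eq
  have h1 : (inner ℂ (P x) (P x) : ℂ) = inner ℂ (A x) (A x) := by
    calc (inner ℂ (P x) (P x) : ℂ)
        = inner ℂ x ((ContinuousLinearMap.adjoint P) (P x)) :=
          (ContinuousLinearMap.adjoint_inner_right P x (P x)).symm
      _ = inner ℂ x ((P * P) x) := by rw [hsa]; rfl
      _ = inner ℂ x ((ContinuousLinearMap.adjoint A) (A x)) := by
          rw [hP, ← ContinuousLinearMap.star_eq_adjoint]; rfl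
      _ = inner ℂ (A x) (A x) := ContinuousLinearMap.adjoint_inner_right A x (A x)
  rw [inner_self_eq_norm_sq_to_K, inner_self_eq_norm_sq_to_K] at h1
  have h2 : ‖P x‖ ^ 2 = ‖A x‖ ^ 2 := by exact_mod_cast h1
  rw [← Real.sqrt_sq (norm_nonneg (P x)), ← Real.sqrt_sq (norm_nonneg (A x)), h2]

/-- Polar-decomposition style contraction: `⟪U y, A x⟫ = ⟪y, |A| x⟫`. -/
lemma exists_polar (A : H →L[ℂ] H) :
    ∃ U : H →L[ℂ] H, ∀ x y : H, (inner ℂ (U y) (A x) : ℂ) = inner ℂ y (absCLM A x) := by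
  set P := absCLM A with hPdef
  have key : ∀ x y : H, P x = P y → A x = A y := by
    intro x y hxy
    have : ‖A x - A y‖ = 0 := by
      rw [← map_sub, ← absCLM_norm_apply A, map_sub, ← hPdef, hxy, sub_self, norm_zero]
    rwa [norm_eq_zero, sub_eq_zero] at this
  set R : Submodule ℂ H := LinearMap.range (P : H →ₗ[ℂ] H) with hR
  have hmem : ∀ y : R, P (Classical.choose y.2) = (y : H) := fun y => Classical.choose_spec y.2
  let U0l : R →ₗ[ℂ] H :=
  { toFun := fun y => A (Classical.choose y.2)
    map_add' := fun y z => by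
      rw [← map_add]
      refine key _ _ ?_
      rw [hmem, map_add, hmem, hmem]; rfl
    map_smul' := fun c y => by
      rw [← map_smul]
      refine key _ _ ?_
      rw [hmem, map_smul, hmem]; rfl }
  have hU0iso : ∀ y : R, ‖U0l y‖ = ‖y‖ := by
    intro y
    show ‖A (Classical.choose y.2)‖ = ‖(y : H)‖
    rw [← absCLM_norm_apply A, ← hPdef, hmem]
  let U0 : R →L[ℂ] H := U0l.mkContinuous 1 (fun y => by rw [hU0iso, one_mul])
  set K : Submodule ℂ H := R.topologicalClosure with hK
  haveI : CompleteSpace K := (Submodule.isClosed_topologicalClosure R).completeSpace_coe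
  let jl : R →ₗ[ℂ] K := Submodule.inclusion R.le_topologicalClosure
  have hjliso : ∀ y : R, ‖jl y‖ = ‖y‖ := fun y => rfl
  let j : R →L[ℂ] K := jl.mkContinuous 1 (fun y => by rw [hjliso, one_mul])
  have h_dense : DenseRange j := by
    rw [Metric.denseRange_iff]
    intro z ε hε
    have hz : (z : H) ∈ closure (R : Set H) :=
      R.topologicalClosure_coe ▸ (z.2 : (z : H) ∈ (K : Set H))
    rcases Metric.mem_closure_iff.mp hz ε hε with ⟨w, hw, hd⟩
    refine ⟨⟨w, hw⟩, ?_⟩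
    rw [Subtype.dist_eq]
    exact hd
  have h_uind : IsUniformInducing j :=
    (AddMonoidHomClass.isometry_of_norm j (fun y => rfl)).isUniformInducing
  let Ubar : K →L[ℂ] H := U0.extend j
  have hUbar : ∀ y : R, Ubar (j y) = U0 y := fun y =>
    ContinuousLinearMap.extend_eq U0 h_dense h_uind y
  have hUbariso : ∀ z : K, ‖Ubar z‖ = ‖z‖ := by
    intro z
    refine h_dense.induction_on z ?_ (fun y => ?_)
    · exact isClosed_eq (continuous_norm.comp Ubar.continuous) continuous_norm
    · rw [hUbar y]; exact hU0iso y
  let Uiso : K →ₗᵢ[ℂ] H := ⟨Ubar.toLinearMap, hUbariso⟩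
  refine ⟨Ubar.comp (K.orthogonalProjectionOnto), ?_⟩
  intro x y
  have hPxR : P x ∈ R := ⟨x, rfl⟩
  have hPxK : P x ∈ K := R.le_topologicalClosure hPxR
  have hAx : Ubar ⟨P x, hPxK⟩ = A x := by
    have h1 : (⟨P x, hPxK⟩ : K) = j ⟨P x, hPxR⟩ := rfl
    rw [h1, hUbar]
    exact key _ _ (hmem ⟨P x, hPxR⟩)
  have hproj : K.orthogonalProjectionOnto ((⟨P x, hPxK⟩ : K) : H) = ⟨P x, hPxK⟩ :=
    Submodule.orthogonalProjectionOnto_mem_subspace_eq_self _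
  have horth : (inner ℂ (y - ((K.orthogonalProjectionOnto y : K) : H)) (P x) : ℂ) = 0 := by
    rw [inner_eq_zero_symm]
    exact (Submodule.mem_orthogonal K _).mp (K.sub_starProjection_mem_orthogonal y) _ hPxK
  calc (inner ℂ ((Ubar.comp (K.orthogonalProjectionOnto)) y) (A x) : ℂ)
      = inner ℂ (Ubar (K.orthogonalProjectionOnto y)) (Ubar ⟨P x, hPxK⟩) := by rw [hAx]; rfl
    _ = inner ℂ (K.orthogonalProjectionOnto y) (⟨P x, hPxK⟩ : K) :=
        Uiso.inner_map_map _ _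
    _ = inner ℂ (((K.orthogonalProjectionOnto y : K) : H)) (P x) := rfl
    _ = inner ℂ y (P x) := by
        have := horth
        rw [inner_sub_left, sub_eq_zero] at this
        exact this.symm


set_option linter.unusedSectionVars false in
theorem upperTri_comm (e : HilbertBasis ℤ ℂ H) {b b' : H →L[ℂ] H}
    (hbU : UpperTri e b) (hb'U : UpperTri e b') : UpperTri e (b * b' - b' * b) := by
  intro m n hmn
  rw [ContinuousLinearMap.sub_apply, inner_sub_right,
    upperTri_mul e hbU hb'U m n hmn, upperTri_mul e hb'U hbU m n hmn, sub_zero]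

set_option linter.unusedSectionVars false in
theorem realDiag_comm (e : HilbertBasis ℤ ℂ H) {b b' : H →L[ℂ] H}
    (hbU : UpperTri e b) (hb'U : UpperTri e b') : RealDiag e (b * b' - b' * b) := by
  intro n
  have h0 : (inner ℂ (e n) ((b * b' - b' * b) (e n)) : ℂ) = 0 := by
    rw [ContinuousLinearMap.sub_apply, inner_sub_right,
      diag_mul e hbU hb'U n, diag_mul e hb'U hbU n, mul_comm, sub_self]
  rw [h0, Complex.zero_im]

/-- `b₂⁺(H)` is an isotropic subalgebra for the imaginary part of the
trace: for `b, b′ ∈ b₂⁺(H)` the commutator `[b, b′] = b b′ − b′ b` belongs to `b₂⁺(H)`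
and is in particular trace class, upper triangular with real diagonal, and moreover
`Im Tr(b b′) = 0`. -/
theorem statement_11 {H : Type*} [NormedAddCommGroup H] [InnerProductSpace ℂ H]
    [CompleteSpace H] (e : HilbertBasis ℤ ℂ H)
    (b b' : H →L[ℂ] H) (hb : InB2 e b) (hb' : InB2 e b') :
    InB2 e (b * b' - b' * b) ∧ IsTC e (b * b' - b' * b) ∧
    UpperTri e (b * b' - b' * b) ∧ RealDiag e (b * b' - b' * b) ∧
    (traceOp e (b * b')).im = 0 := by
  obtain ⟨hbHS, hbU, hbD⟩ := hb
  obtain ⟨hb'HS, hb'U, hb'D⟩ := hb'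
  have hUT : UpperTri e (b * b' - b' * b) := upperTri_comm e hbU hb'U
  have hRD : RealDiag e (b * b' - b' * b) := realDiag_comm e hbU hb'U
  have hHS : IsHS e (b * b' - b' * b) := by
    have hsum : Summable (fun n : ℤ =>
        2 * (‖b‖ ^ 2 * ‖b' (e n)‖ ^ 2 + ‖b'‖ ^ 2 * ‖b (e n)‖ ^ 2)) :=
      ((hb'HS.mul_left _).add (hbHS.mul_left _)).mul_left 2
    refine Summable.of_nonneg_of_le (fun n => by positivity) (fun n => ?_) hsum
    have h1 : ‖(b * b' - b' * b) (e n)‖ ≤ ‖b (b' (e n))‖ + ‖b' (b (e n))‖ := by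
      rw [ContinuousLinearMap.sub_apply]
      exact norm_sub_le _ _
    have h2 : ‖b (b' (e n))‖ ≤ ‖b‖ * ‖b' (e n)‖ := b.le_opNorm _
    have h3 : ‖b' (b (e n))‖ ≤ ‖b'‖ * ‖b (e n)‖ := b'.le_opNorm _
    nlinarith [norm_nonneg ((b * b' - b' * b) (e n)), norm_nonneg (b (b' (e n))),
      norm_nonneg (b' (b (e n))), norm_nonneg b, norm_nonneg b',
      norm_nonneg (b' (e n)), norm_nonneg (b (e n)),
      mul_nonneg (norm_nonneg b) (norm_nonneg (b' (e n))),
      mul_nonneg (norm_nonneg b') (norm_nonneg (b (e n))),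
      sq_nonneg (‖b‖ * ‖b' (e n)‖ - ‖b'‖ * ‖b (e n)‖),
      sq_nonneg (‖b (b' (e n))‖ - ‖b' (b (e n))‖)]
  have hTC : IsTC e (b * b' - b' * b) := by
    set A := b * b' - b' * b with hA
    obtain ⟨U, hU⟩ := exists_polar A
    have hg1 : Summable (fun n : ℤ =>
        ‖(ContinuousLinearMap.adjoint b) (U (e n))‖ * ‖b' (e n)‖) :=
      summable_mul_of_sq (fun n => norm_nonneg _) (fun n => norm_nonneg _)
        (summable_adj_comp e hbHS U) hb'HS
    have hg2 : Summable (fun n : ℤ =>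
        ‖(ContinuousLinearMap.adjoint b') (U (e n))‖ * ‖b (e n)‖) :=
      summable_mul_of_sq (fun n => norm_nonneg _) (fun n => norm_nonneg _)
        (summable_adj_comp e hb'HS U) hbHS
    refine Summable.of_nonneg_of_le ?_ ?_ (hg1.add hg2)
    · intro n
      exact (Complex.nonneg_iff.mp ((absCLM_isPositive A).inner_nonneg_right (e n))).1
    · intro n
      have hre : (inner ℂ (e n) (absCLM A (e n)) : ℂ).re
          ≤ ‖(inner ℂ (e n) (absCLM A (e n)) : ℂ)‖ := by
        simpa using RCLike.re_le_norm (K := ℂ) (inner ℂ (e n) (absCLM A (e n)))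
      have heq : (inner ℂ (e n) (absCLM A (e n)) : ℂ) = inner ℂ (U (e n)) (A (e n)) :=
        (hU (e n) (e n)).symm
      have hsplit : (inner ℂ (U (e n)) (A (e n)) : ℂ)
          = inner ℂ ((ContinuousLinearMap.adjoint b) (U (e n))) (b' (e n))
            - inner ℂ ((ContinuousLinearMap.adjoint b') (U (e n))) (b (e n)) := by
        rw [hA, ContinuousLinearMap.sub_apply, inner_sub_right,
          show ((b * b') (e n)) = b (b' (e n)) from rfl,
          show ((b' * b) (e n)) = b' (b (e n)) from rfl,
          ← ContinuousLinearMap.adjoint_inner_left b (b' (e n)) (U (e n)),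
          ← ContinuousLinearMap.adjoint_inner_left b' (b (e n)) (U (e n))]
      calc (inner ℂ (e n) (absCLM A (e n)) : ℂ).re
          ≤ ‖(inner ℂ (e n) (absCLM A (e n)) : ℂ)‖ := hre
        _ = ‖(inner ℂ ((ContinuousLinearMap.adjoint b) (U (e n))) (b' (e n)) : ℂ)
              - inner ℂ ((ContinuousLinearMap.adjoint b') (U (e n))) (b (e n))‖ := by
            rw [heq, hsplit]
        _ ≤ ‖(inner ℂ ((ContinuousLinearMap.adjoint b) (U (e n))) (b' (e n)) : ℂ)‖
              + ‖(inner ℂ ((ContinuousLinearMap.adjoint b') (U (e n))) (b (e n)) : ℂ)‖ :=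
            norm_sub_le _ _
        _ ≤ _ := add_le_add (norm_inner_le_norm _ _) (norm_inner_le_norm _ _)
  have hIm : (traceOp e (b * b')).im = 0 := by
    have hterm : ∀ n : ℤ, star (inner ℂ (e n) ((b * b') (e n)) : ℂ)
        = inner ℂ (e n) ((b * b') (e n)) := by
      intro n
      rw [diag_mul e hbU hb'U n, star_mul']
      have h1 : star (inner ℂ (e n) (b (e n)) : ℂ) = inner ℂ (e n) (b (e n)) := by
        rw [Complex.star_def]
        exact Complex.conj_eq_iff_im.mpr (hbD n)
      have h2 : star (inner ℂ (e n) (b' (e n)) : ℂ) = inner ℂ (e n) (b' (e n)) := by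
        rw [Complex.star_def]
        exact Complex.conj_eq_iff_im.mpr (hb'D n)
      rw [h1, h2, mul_comm]
    have hconj : star (traceOp e (b * b')) = traceOp e (b * b') := by
      rw [traceOp, tsum_star, tsum_congr hterm]
    rw [← Complex.conj_eq_iff_im, ← Complex.star_def]
    exact hconj
  exact ⟨⟨hHS, hUT, hRD⟩, hTC, hUT, hRD, hIm⟩

end PL
end
end

section
/- For every unitary operator g on H, the bilinear form Π_r(g) is antisymmetric and vanishes on skew-hermitian arguments: for all trace-class operators x₁, x₂ on H, Π_r(g)(x₁, x₂) = −Π_r(g)(x₂, x₁), and if x₁ is skew-hermitian then Π_r(g)(x₁, x₂) = 0 and Π_r(g)(x₂, x₁) = 0. Hence Π_r(g) descends to a well-defined antisymmetric bilinear form on the quotient L₁(H)/u₁(H). -/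
/- Setting: `H` is a separable complex Hilbert space with a fixed orthonormal
(Hilbert) basis `e` indexed by `ℤ`. -/

set_option synthInstance.maxHeartbeats 1000000
set_option maxHeartbeats 2000000
set_option linter.unusedSectionVars false

noncomputable section
open ContinuousLinearMap

namespace PL

variable {H : Type*} [NormedAddCommGroup H] [InnerProductSpace ℂ H] [CompleteSpace H]

/-- Given projection maps `pu`, `pb` realizing `L₂(H) = u₂(H) ⊕ b₂⁺(H)`, and a
unitary `g` (so `g⁻¹ = g*`), the bilinear map
`Π_r(g)(x₁, x₂) = Im Tr((g⁻¹ p_{b₂⁺}(x₁) g) · p_{u₂}(g⁻¹ p_{b₂⁺}(x₂) g))`. -/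
def Pir (e : HilbertBasis ℤ ℂ H) (pu pb : (H →L[ℂ] H) → (H →L[ℂ] H))
    (g x₁ x₂ : H →L[ℂ] H) : ℝ :=
  (traceOp e ((star g * pb x₁ * g) * pu (star g * pb x₂ * g))).im

local notation "⟪" x ", " y "⟫" => (inner ℂ x y : ℂ)

lemma hasSum_normSq (e : HilbertBasis ℤ ℂ H) (v : H) :
    HasSum (fun m : ℤ => ‖⟪e m, v⟫‖ ^ 2) (‖v‖ ^ 2) := by
  have h := Complex.hasSum_re (e.hasSum_inner_mul_inner v v)
  have h2 : (fun m : ℤ => ((inner ℂ v (e m) : ℂ) * ⟪e m, v⟫).re)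
      = fun m : ℤ => ‖⟪e m, v⟫‖ ^ 2 := by
    funext m
    rw [← inner_conj_symm (e m) v, Complex.mul_conj, Complex.ofReal_re, RCLike.norm_conj,
      ← Complex.sq_norm]
  rw [h2] at h
  convert h using 1
  rw [← RCLike.re_to_complex, inner_self_eq_norm_sq]

lemma inner_star_apply (A : H →L[ℂ] H) (x y : H) : ⟪(star A) x, y⟫ = ⟪x, A y⟫ := by
  rw [star_eq_adjoint, adjoint_inner_left]

lemma inner_star_apply' (A : H →L[ℂ] H) (x y : H) : ⟪x, (star A) y⟫ = ⟪A x, y⟫ := by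
  rw [star_eq_adjoint, adjoint_inner_right]

/-- Summability of the squared entries, column-major. -/
lemma summable_entries (e : HilbertBasis ℤ ℂ H) {A : H →L[ℂ] H} (hA : IsHS e A) :
    Summable (fun p : ℤ × ℤ => ‖⟪e p.2, A (e p.1)⟫‖ ^ 2) := by
  rw [summable_prod_of_nonneg (fun p => by positivity)]
  constructor
  · intro n; exact (hasSum_normSq e (A (e n))).summable
  · have : (fun n : ℤ => ∑' m : ℤ, ‖⟪e m, A (e n)⟫‖ ^ 2) = fun n => ‖A (e n)‖ ^ 2 := by
      funext n; exact (hasSum_normSq e (A (e n))).tsum_eq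
    rw [this]; exact hA

/-- A converse: if squared entries are summable (column-major) then `A` is HS. -/
lemma isHS_of_summable_entries (e : HilbertBasis ℤ ℂ H) {A : H →L[ℂ] H}
    (h : Summable (fun p : ℤ × ℤ => ‖⟪e p.2, A (e p.1)⟫‖ ^ 2)) : IsHS e A := by
  rw [summable_prod_of_nonneg (fun p => by positivity)] at h
  have : (fun n : ℤ => ∑' m : ℤ, ‖⟪e m, A (e n)⟫‖ ^ 2) = fun n => ‖A (e n)‖ ^ 2 := by
    funext n; exact (hasSum_normSq e (A (e n))).tsum_eq
  rw [this] at h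
  exact h.2

lemma isHS_star (e : HilbertBasis ℤ ℂ H) {A : H →L[ℂ] H} (hA : IsHS e A) :
    IsHS e (star A) := by
  apply isHS_of_summable_entries e
  have h := (summable_entries e hA).prod_symm
  apply h.congr
  intro p
  simp only [Prod.fst_swap, Prod.snd_swap]
  rw [inner_star_apply' A (e p.2) (e p.1)]
  exact congrArg (· ^ 2) (norm_inner_symm _ _)

lemma isHS_of_star (e : HilbertBasis ℤ ℂ H) {A : H →L[ℂ] H} (hA : IsHS e (star A)) :
    IsHS e A := by
  have := isHS_star e hA; rwa [star_star] at this

lemma isHS_mul_left (e : HilbertBasis ℤ ℂ H) (B : H →L[ℂ] H) {A : H →L[ℂ] H}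
    (hA : IsHS e A) : IsHS e (B * A) := by
  apply Summable.of_nonneg_of_le (fun n => by positivity)
    (fun n => ?_) (hA.mul_left (‖B‖ ^ 2))
  have h1 : ‖(B * A) (e n)‖ ≤ ‖B‖ * ‖A (e n)‖ := (B.le_opNorm _)
  calc ‖(B * A) (e n)‖ ^ 2 ≤ (‖B‖ * ‖A (e n)‖) ^ 2 := by
        apply pow_le_pow_left₀ (norm_nonneg _) h1
    _ = ‖B‖ ^ 2 * ‖A (e n)‖ ^ 2 := by ring

lemma isHS_mul_right (e : HilbertBasis ℤ ℂ H) (B : H →L[ℂ] H) {A : H →L[ℂ] H}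
    (hA : IsHS e A) : IsHS e (A * B) := by
  apply isHS_of_star e
  rw [star_mul]
  exact isHS_mul_left e (star B) (isHS_star e hA)

/-- The double-indexed entry products whose sum is the trace of `A * B`. -/
def entProd (e : HilbertBasis ℤ ℂ H) (A B : H →L[ℂ] H) : ℤ × ℤ → ℂ :=
  fun p => ⟪e p.1, A (e p.2)⟫ * ⟪e p.2, B (e p.1)⟫

lemma hasSum_diag_entry (e : HilbertBasis ℤ ℂ H) (A B : H →L[ℂ] H) (n : ℤ) :
    HasSum (fun m : ℤ => entProd e A B (n, m)) ⟪e n, (A * B) (e n)⟫ := by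
  have h := e.hasSum_inner_mul_inner ((star A) (e n)) (B (e n))
  have h2 : (fun m : ℤ => (inner ℂ ((star A) (e n)) (e m) : ℂ) * ⟪e m, B (e n)⟫)
      = fun m : ℤ => entProd e A B (n, m) := by
    funext m; rw [entProd, inner_star_apply A (e n) (e m)]
  rw [h2] at h
  have h3 : (inner ℂ ((star A) (e n)) (B (e n)) : ℂ) = ⟪e n, (A * B) (e n)⟫ := by
    rw [inner_star_apply A (e n) (B (e n))]; rfl
  rwa [h3] at h

lemma summable_entProd (e : HilbertBasis ℤ ℂ H) {A B : H →L[ℂ] H}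
    (hA : IsHS e A) (hB : IsHS e B) : Summable (entProd e A B) := by
  apply Summable.of_norm
  have h1 : Summable (fun p : ℤ × ℤ => ‖⟪e p.1, A (e p.2)⟫‖ ^ 2) :=
    (summable_entries e hA).prod_symm
  have h2 : Summable (fun p : ℤ × ℤ => ‖⟪e p.2, B (e p.1)⟫‖ ^ 2) := summable_entries e hB
  apply Summable.of_nonneg_of_le (fun p => norm_nonneg _) (fun p => ?_)
    (((h1.add h2).div_const 2))
  rw [entProd, norm_mul]
  have := two_mul_le_add_sq ‖⟪e p.1, A (e p.2)⟫‖ ‖⟪e p.2, B (e p.1)⟫‖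
  linarith

lemma hasSum_trace_mul (e : HilbertBasis ℤ ℂ H) {A B : H →L[ℂ] H}
    (hA : IsHS e A) (hB : IsHS e B) :
    HasSum (fun n : ℤ => ⟪e n, (A * B) (e n)⟫) (∑' p, entProd e A B p) := by
  exact HasSum.prod_fiberwise (summable_entProd e hA hB).hasSum
    (fun n => hasSum_diag_entry e A B n)

lemma summable_diag_mul (e : HilbertBasis ℤ ℂ H) {A B : H →L[ℂ] H}
    (hA : IsHS e A) (hB : IsHS e B) :
    Summable (fun n : ℤ => ⟪e n, (A * B) (e n)⟫) :=
  (hasSum_trace_mul e hA hB).summable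

lemma traceOp_mul_eq (e : HilbertBasis ℤ ℂ H) {A B : H →L[ℂ] H}
    (hA : IsHS e A) (hB : IsHS e B) :
    traceOp e (A * B) = ∑' p, entProd e A B p :=
  (hasSum_trace_mul e hA hB).tsum_eq

lemma traceOp_comm (e : HilbertBasis ℤ ℂ H) {A B : H →L[ℂ] H}
    (hA : IsHS e A) (hB : IsHS e B) :
    traceOp e (A * B) = traceOp e (B * A) := by
  rw [traceOp_mul_eq e hA hB, traceOp_mul_eq e hB hA,
    ← (Equiv.prodComm ℤ ℤ).tsum_eq (entProd e B A)]
  apply tsum_congr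
  intro p
  simp only [Equiv.prodComm_apply, entProd, Prod.fst_swap, Prod.snd_swap]
  ring

lemma traceOp_star (e : HilbertBasis ℤ ℂ H) (A : H →L[ℂ] H) :
    traceOp e (star A) = starRingEnd ℂ (traceOp e A) := by
  rw [traceOp, traceOp]
  have h : (fun n : ℤ => ⟪e n, (star A) (e n)⟫)
      = fun n : ℤ => starRingEnd ℂ ⟪e n, A (e n)⟫ := by
    funext n
    rw [inner_star_apply' A (e n) (e n), ← inner_conj_symm]
  rw [h]
  exact (tsum_star).symm

lemma traceOp_add (e : HilbertBasis ℤ ℂ H) {A B : H →L[ℂ] H}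
    (hA : Summable (fun n : ℤ => ⟪e n, A (e n)⟫))
    (hB : Summable (fun n : ℤ => ⟪e n, B (e n)⟫)) :
    traceOp e (A + B) = traceOp e A + traceOp e B := by
  rw [traceOp, traceOp, traceOp, ← Summable.tsum_add hA hB]
  apply tsum_congr; intro n
  simp [inner_add_right]

lemma traceOp_zero (e : HilbertBasis ℤ ℂ H) : traceOp e (0 : H →L[ℂ] H) = 0 := by
  simp [traceOp]

/-- Trace of a product of two skew-hermitian HS operators is real. -/
lemma im_traceOp_uu (e : HilbertBasis ℤ ℂ H) {u₁ u₂ : H →L[ℂ] H}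
    (h₁ : IsHS e u₁) (h₂ : IsHS e u₂) (hs₁ : SkewHerm u₁) (hs₂ : SkewHerm u₂) :
    (traceOp e (u₁ * u₂)).im = 0 := by
  rw [← Complex.conj_eq_iff_im]
  rw [← traceOp_star e, star_mul, hs₁, hs₂, neg_mul_neg]
  exact (traceOp_comm e h₂ h₁)

/-- Trace of a product of two upper-triangular real-diagonal HS operators is real. -/
lemma im_traceOp_bb (e : HilbertBasis ℤ ℂ H) {b₁ b₂ : H →L[ℂ] H}
    (h₁ : IsHS e b₁) (h₂ : IsHS e b₂)
    (ht₁ : UpperTri e b₁) (ht₂ : UpperTri e b₂)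
    (hd₁ : RealDiag e b₁) (hd₂ : RealDiag e b₂) :
    (traceOp e (b₁ * b₂)).im = 0 := by
  have hdiag : ∀ n : ℤ, ⟪e n, (b₁ * b₂) (e n)⟫ = ⟪e n, b₁ (e n)⟫ * ⟪e n, b₂ (e n)⟫ := by
    intro n
    have h0 : ∀ m : ℤ, m ≠ n → entProd e b₁ b₂ (n, m) = 0 := by
      intro m hm
      rcases lt_or_gt_of_ne hm with h | h
      · rw [entProd]; simp only []
        rw [ht₂ m n h, mul_zero]
      · rw [entProd]; simp only []
        rw [ht₁ n m h, zero_mul]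
    have hs := hasSum_single (f := fun m : ℤ => entProd e b₁ b₂ (n, m)) n (fun m hm => h0 m hm)
    exact ((hasSum_diag_entry e b₁ b₂ n).unique hs)
  have him : ∀ n : ℤ, (⟪e n, (b₁ * b₂) (e n)⟫).im = 0 := by
    intro n
    rw [hdiag n, Complex.mul_im, hd₁ n, hd₂ n]
    ring
  have hsum := hasSum_trace_mul e h₁ h₂
  have := Complex.hasSum_im hsum
  rw [show (fun n : ℤ => (⟪e n, (b₁ * b₂) (e n)⟫).im) = fun _ => (0:ℝ) from funext him] at this
  have h0 : (∑' p, entProd e b₁ b₂ p).im = 0 := this.unique hasSum_zero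
  rw [traceOp_mul_eq e h₁ h₂]
  exact h0

/-- An operator that is skew-hermitian, upper triangular with real diagonal is zero. -/
lemma skew_tri_eq_zero (e : HilbertBasis ℤ ℂ H) {c : H →L[ℂ] H}
    (hsk : SkewHerm c) (ht : UpperTri e c) (hd : RealDiag e c) : c = 0 := by
  have hent : ∀ m n : ℤ, ⟪e m, c (e n)⟫ = 0 := by
    intro m n
    rcases lt_trichotomy m n with h | h | h
    · exact ht m n h
    · subst h
      have h1 : ⟪e m, c (e m)⟫ = - starRingEnd ℂ ⟪e m, c (e m)⟫ := by
        conv_lhs => rw [show c = -(star c) by rw [hsk, neg_neg]]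
        rw [ContinuousLinearMap.neg_apply, inner_neg_right,
          inner_star_apply' c (e m) (e m), ← inner_conj_symm]
      have h2 := hd m
      have hre : (⟪e m, c (e m)⟫).re = 0 := by
        have := congrArg Complex.re h1
        simp only [Complex.neg_re, Complex.conj_re] at this
        linarith
      exact Complex.ext hre h2
    · have h1 : ⟪e m, c (e n)⟫ = - starRingEnd ℂ ⟪e n, c (e m)⟫ := by
        conv_lhs => rw [show c = -(star c) by rw [hsk, neg_neg]]
        rw [ContinuousLinearMap.neg_apply, inner_neg_right,
          inner_star_apply' c (e m) (e n), ← inner_conj_symm]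
      rw [h1, ht n m h, map_zero, neg_zero]
  have happ : ∀ n : ℤ, c (e n) = 0 := by
    intro n
    have h := hasSum_normSq e (c (e n))
    rw [show (fun m : ℤ => ‖⟪e m, c (e n)⟫‖ ^ 2) = fun _ => (0:ℝ) by
      funext m; rw [hent m n]; simp] at h
    have : ‖c (e n)‖ ^ 2 = 0 := (hasSum_zero.unique h).symm
    have : ‖c (e n)‖ = 0 := by
      have := sq_eq_zero_iff.mp this
      exact this
    exact norm_eq_zero.mp this
  have hdense : Dense ((Submodule.span ℂ (Set.range fun i => e i)) : Set H) :=
    Submodule.dense_iff_topologicalClosure_eq_top.mpr e.dense_span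
  apply ContinuousLinearMap.ext_on hdense
  rintro x ⟨n, rfl⟩
  simp [happ n]

lemma isHS_of_isTC (e : HilbertBasis ℤ ℂ H) {A : H →L[ℂ] H} (h : IsTC e A) :
    IsHS e A := by
  set T := absCLM A with hT
  have hAA : (0 : H →L[ℂ] H) ≤ star A * A := star_mul_self_nonneg A
  have hTnn : (0 : H →L[ℂ] H) ≤ T := CFC.sqrt_nonneg _
  have hsq : T * T = star A * A := CFC.sqrt_mul_sqrt_self _ hAA
  have hTsa : IsSelfAdjoint T := IsSelfAdjoint.of_nonneg hTnn
  set M := ‖T‖ with hM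
  -- key operator inequality : T * T ≤ (M : ℂ) • T
  have key : T * T ≤ (M : ℂ) • T := by
    set s := CFC.sqrt T with hs
    have hsnn : (0 : H →L[ℂ] H) ≤ s := CFC.sqrt_nonneg _
    have hssa : IsSelfAdjoint s := IsSelfAdjoint.of_nonneg hsnn
    have hss : s * s = T := CFC.sqrt_mul_sqrt_self _ hTnn
    have h1 : T ≤ algebraMap ℝ (H →L[ℂ] H) M := hTsa.le_algebraMap_norm_self
    have h2 := star_left_conjugate_le_conjugate h1 s
    rw [hssa.star_eq] at h2
    have hL : s * T * s = T * T := by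
      rw [← hss]; noncomm_ring
    have hR : s * algebraMap ℝ (H →L[ℂ] H) M * s = (M : ℂ) • T := by
      have halg : algebraMap ℝ (H →L[ℂ] H) M = (M : ℂ) • 1 := by
        rw [show algebraMap ℝ (H →L[ℂ] H) M = algebraMap ℂ (H →L[ℂ] H) (M : ℂ) by
          rw [IsScalarTower.algebraMap_apply ℝ ℂ (H →L[ℂ] H)]
          norm_num, Algebra.algebraMap_eq_smul_one]
      rw [halg, mul_smul_comm, mul_one, smul_mul_assoc, hss]
    rw [hL, hR] at h2
    exact h2
  -- pointwise consequence
  have hpt : ∀ v : H, ‖A v‖ ^ 2 ≤ M * (inner ℂ v (T v) : ℂ).re := by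
    intro v
    have hpos := (ContinuousLinearMap.nonneg_iff_isPositive _).mp (sub_nonneg.mpr key)
    have h0 := hpos.re_inner_nonneg_right v
    have hsub : (inner ℂ v (((M : ℂ) • T - T * T) v) : ℂ)
        = (M : ℂ) * (inner ℂ v (T v) : ℂ) - (inner ℂ v ((T * T) v) : ℂ) := by
      rw [ContinuousLinearMap.sub_apply, inner_sub_right,
        ContinuousLinearMap.smul_apply, inner_smul_right]
    have hre : (0:ℝ) ≤ ((M : ℂ) * (inner ℂ v (T v) : ℂ) - (inner ℂ v ((T * T) v) : ℂ)).re := by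
      rw [← hsub]
      exact h0
    have hTT : ((inner ℂ v ((T * T) v) : ℂ)).re = ‖T v‖ ^ 2 := by
      have : (inner ℂ v ((T * T) v) : ℂ) = (inner ℂ (T v) (T v) : ℂ) := by
        rw [ContinuousLinearMap.mul_apply, ← inner_star_apply T v (T v), hTsa.star_eq]
      rw [this, ← RCLike.re_to_complex, inner_self_eq_norm_sq]
    have hAv : ‖A v‖ ^ 2 = ‖T v‖ ^ 2 := by
      have h3 : (inner ℂ v ((star A * A) v) : ℂ) = (inner ℂ (A v) (A v) : ℂ) := by
        rw [ContinuousLinearMap.mul_apply, inner_star_apply' A v (A v)]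
      have h4 : (inner ℂ v ((T * T) v) : ℂ) = (inner ℂ (A v) (A v) : ℂ) := by rw [hsq, h3]
      have h5 : ((inner ℂ (A v) (A v) : ℂ)).re = ‖A v‖ ^ 2 := by
        rw [← RCLike.re_to_complex, inner_self_eq_norm_sq]
      rw [← h5, ← h4, hTT]
    rw [hAv]
    have : ((M : ℂ) * (inner ℂ v (T v) : ℂ)).re = M * (inner ℂ v (T v) : ℂ).re := by
      simp [Complex.mul_re]
    rw [Complex.sub_re, this, hTT] at hre
    linarith
  apply Summable.of_nonneg_of_le (fun n => by positivity) (fun n => hpt (e n)) (h.mul_left M)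

/-- `Im Tr((g⁻¹ c₁ g)(g⁻¹ c₂ g)) = 0` when `c₁, c₂ ∈ b₂⁺`. -/
lemma im_traceOp_conj (e : HilbertBasis ℤ ℂ H) {c₁ c₂ g : H →L[ℂ] H}
    (hg : g ∈ unitary (H →L[ℂ] H)) (h₁ : InB2 e c₁) (h₂ : InB2 e c₂) :
    (traceOp e ((star g * c₁ * g) * (star g * c₂ * g))).im = 0 := by
  obtain ⟨hg₁, hg₂⟩ := Unitary.mem_iff.mp hg
  have hX : IsHS e (star g * c₁) := isHS_mul_left e (star g) h₁.1
  have hY : IsHS e (c₂ * g) := isHS_mul_right e g h₂.1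
  have hyy : (star g * c₁ * g) * (star g * c₂ * g) = (star g * c₁) * (c₂ * g) := by
    simp only [mul_assoc]
    rw [← mul_assoc g (star g) (c₂ * g), hg₂, one_mul]
  rw [hyy, traceOp_comm e hX hY]
  have hyx : (c₂ * g) * (star g * c₁) = c₂ * c₁ := by
    simp only [mul_assoc]
    rw [← mul_assoc g (star g) c₁, hg₂, one_mul]
  rw [hyx]
  exact im_traceOp_bb e h₂.1 h₁.1 h₂.2.1 h₁.2.1 h₂.2.2 h₁.2.2

lemma upperTri_neg (e : HilbertBasis ℤ ℂ H) {A : H →L[ℂ] H} (h : UpperTri e A) :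
    UpperTri e (-A) := by
  intro m n hmn
  rw [ContinuousLinearMap.neg_apply, inner_neg_right, h m n hmn, neg_zero]

lemma realDiag_neg (e : HilbertBasis ℤ ℂ H) {A : H →L[ℂ] H} (h : RealDiag e A) :
    RealDiag e (-A) := by
  intro n
  rw [ContinuousLinearMap.neg_apply, inner_neg_right, Complex.neg_im, h n, neg_zero]

/-- for every unitary `g`, `Π_r(g)` is antisymmetric on trace-class
operators and vanishes whenever one argument is skew-hermitian (hence it descends to
the quotient `L₁(H)/u₁(H)`). -/
theorem statement_13 {H : Type*} [NormedAddCommGroup H] [InnerProductSpace ℂ H]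
    [CompleteSpace H] (e : HilbertBasis ℤ ℂ H)
    (pu pb : (H →L[ℂ] H) → (H →L[ℂ] H))
    (hdec : ∀ x : H →L[ℂ] H, IsHS e x →
      InU2 e (pu x) ∧ InB2 e (pb x) ∧ pu x + pb x = x)
    (g : H →L[ℂ] H) (hg : g ∈ unitary (H →L[ℂ] H))
    (x₁ x₂ : H →L[ℂ] H) (hx₁ : IsTC e x₁) (hx₂ : IsTC e x₂) :
    Pir e pu pb g x₁ x₂ = - Pir e pu pb g x₂ x₁ ∧
    (SkewHerm x₁ → Pir e pu pb g x₁ x₂ = 0 ∧ Pir e pu pb g x₂ x₁ = 0) := by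
  have hx₁HS : IsHS e x₁ := isHS_of_isTC e hx₁
  have hx₂HS : IsHS e x₂ := isHS_of_isTC e hx₂
  obtain ⟨hpu₁, hpb₁, hsum₁⟩ := hdec x₁ hx₁HS
  obtain ⟨hpu₂, hpb₂, hsum₂⟩ := hdec x₂ hx₂HS
  have hy₁HS : IsHS e (star g * pb x₁ * g) :=
    isHS_mul_right e g (isHS_mul_left e (star g) hpb₁.1)
  have hy₂HS : IsHS e (star g * pb x₂ * g) :=
    isHS_mul_right e g (isHS_mul_left e (star g) hpb₂.1)
  obtain ⟨hz₁, hw₁, hzw₁⟩ := hdec _ hy₁HS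
  obtain ⟨hz₂, hw₂, hzw₂⟩ := hdec _ hy₂HS
  set y₁ := star g * pb x₁ * g with hy₁def
  set y₂ := star g * pb x₂ * g with hy₂def
  set z₁ := pu y₁ with hz₁def
  set z₂ := pu y₂ with hz₂def
  set w₁ := pb y₁ with hw₁def
  set w₂ := pb y₂ with hw₂def
  have hz₁HS : IsHS e z₁ := hz₁.1
  have hz₂HS : IsHS e z₂ := hz₂.1
  have hw₁HS : IsHS e w₁ := hw₁.1
  have hw₂HS : IsHS e w₂ := hw₂.1
  have hP₁₂ : Pir e pu pb g x₁ x₂ = (traceOp e (y₁ * z₂)).im := rfl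
  have hP₂₁ : Pir e pu pb g x₂ x₁ = (traceOp e (y₂ * z₁)).im := rfl
  have hT₁ : traceOp e (y₁ * z₂) = traceOp e (z₁ * z₂) + traceOp e (w₁ * z₂) := by
    rw [show y₁ * z₂ = z₁ * z₂ + w₁ * z₂ by rw [← add_mul, hzw₁]]
    exact traceOp_add e (summable_diag_mul e hz₁HS hz₂HS) (summable_diag_mul e hw₁HS hz₂HS)
  have hT₂ : traceOp e (y₂ * z₁) = traceOp e (z₁ * z₂) + traceOp e (z₁ * w₂) := by
    rw [show y₂ * z₁ = z₂ * z₁ + w₂ * z₁ by rw [← add_mul, hzw₂]]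
    rw [traceOp_add e (summable_diag_mul e hz₂HS hz₁HS) (summable_diag_mul e hw₂HS hz₁HS),
      traceOp_comm e hz₂HS hz₁HS, traceOp_comm e hw₂HS hz₁HS]
  have hT₃ : traceOp e (y₁ * y₂) = traceOp e (z₁ * z₂) + traceOp e (z₁ * w₂)
      + traceOp e (w₁ * z₂) + traceOp e (w₁ * w₂) := by
    rw [show y₁ * y₂ = z₁ * y₂ + w₁ * y₂ by rw [← add_mul, hzw₁]]
    rw [traceOp_add e (summable_diag_mul e hz₁HS hy₂HS) (summable_diag_mul e hw₁HS hy₂HS)]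
    rw [show z₁ * y₂ = z₁ * z₂ + z₁ * w₂ by rw [← mul_add, hzw₂]]
    rw [show w₁ * y₂ = w₁ * z₂ + w₁ * w₂ by rw [← mul_add, hzw₂]]
    rw [traceOp_add e (summable_diag_mul e hz₁HS hz₂HS) (summable_diag_mul e hz₁HS hw₂HS)]
    rw [traceOp_add e (summable_diag_mul e hw₁HS hz₂HS) (summable_diag_mul e hw₁HS hw₂HS)]
    ring
  have hkey : traceOp e (y₁ * z₂) + traceOp e (y₂ * z₁)
      = traceOp e (y₁ * y₂) + traceOp e (z₁ * z₂) - traceOp e (w₁ * w₂) := by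
    rw [hT₁, hT₂, hT₃]; ring
  have hyyim : (traceOp e (y₁ * y₂)).im = 0 := by
    rw [hy₁def, hy₂def]
    exact im_traceOp_conj e hg hpb₁ hpb₂
  have him : (traceOp e (y₁ * z₂)).im + (traceOp e (y₂ * z₁)).im = 0 := by
    have h := congrArg Complex.im hkey
    rw [Complex.add_im, Complex.sub_im, Complex.add_im] at h
    rw [hyyim, im_traceOp_uu e hz₁HS hz₂HS hz₁.2 hz₂.2,
      im_traceOp_bb e hw₁HS hw₂HS hw₁.2.1 hw₂.2.1 hw₁.2.2 hw₂.2.2] at h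
    linarith
  constructor
  · rw [hP₁₂, hP₂₁]; linarith
  · intro hsk
    have hpb₁eq : pb x₁ = x₁ - pu x₁ := eq_sub_of_add_eq' hsum₁
    have hsk₁ : SkewHerm (pb x₁) := by
      rw [SkewHerm, hpb₁eq, star_sub, hsk, hpu₁.2]
      abel
    have hc₁0 : pb x₁ = 0 := skew_tri_eq_zero e hsk₁ hpb₁.2.1 hpb₁.2.2
    have hy₁0 : y₁ = 0 := by rw [hy₁def, hc₁0, mul_zero, zero_mul]
    have h0HS : IsHS e (0 : H →L[ℂ] H) := by
      have : (fun n : ℤ => ‖(0 : H →L[ℂ] H) (e n)‖ ^ 2) = fun _ => (0:ℝ) := by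
        funext n; simp
      rw [IsHS, this]
      exact summable_zero
    obtain ⟨h0u, h0b, h0s⟩ := hdec 0 h0HS
    have hpu0 : pu (0 : H →L[ℂ] H) = 0 := by
      have heq : pu (0 : H →L[ℂ] H) = -(pb 0) := eq_neg_of_add_eq_zero_left h0s
      have ht := upperTri_neg e h0b.2.1
      have hd := realDiag_neg e h0b.2.2
      rw [← heq] at ht hd
      exact skew_tri_eq_zero e h0u.2 ht hd
    have hz₁0 : z₁ = 0 := by rw [hz₁def, hy₁0, hpu0]
    constructor
    · rw [hP₁₂, hy₁0, zero_mul, traceOp_zero]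
      rfl
    · rw [hP₂₁, hz₁0, mul_zero, traceOp_zero]
      rfl

end PL
end
end
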